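/- arXiv:1003.4668 — 5 statements merged into one kernel-verified Lean document; each statement's English description precedes it below -/
import Mathlib

section
/- In the quasi-ordinary setup below, assume ∑_{i=1}^{m_1} a_{11i} < 1. Then Λ ⊆ {η = 0}: every point ℓ ∈ Λ has homogeneous coordinate η equal to 0. -/
open Filter Topology

noncomputable section

/-- The monomial `M_k(t) = ∏ t_{ij}^{b_{kij}}`. -/
def qoMonom {g : ℕ} (m : Fin g → ℕ) (b : Fin g → ((k : Fin g) × Fin (m k)) → ℕ)
    (k : Fin g) (t : ((k : Fin g) × Fin (m k)) → ℂ) : ℂ :=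
  ∏ p : (k : Fin g) × Fin (m k), t p ^ b k p

/-- `φ(t) = ∑ M_k(t) f_k(t)`. -/
def qoPhi {g : ℕ} (m : Fin g → ℕ) (b : Fin g → ((k : Fin g) × Fin (m k)) → ℕ)
    (f : Fin g → (((k : Fin g) × Fin (m k)) → ℂ) → ℂ)
    (t : ((k : Fin g) × Fin (m k)) → ℂ) : ℂ :=
  ∑ k, qoMonom m b k t * f k t

/-- `ξ_{kj}(t) = (∂φ/∂t_{kj})(t) / (c_{kj} t_{kj}^{c_{kj}-1})`. -/
def qoXi {g : ℕ} (m : Fin g → ℕ) (b : Fin g → ((k : Fin g) × Fin (m k)) → ℕ)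
    (c : ((k : Fin g) × Fin (m k)) → ℕ)
    (f : Fin g → (((k : Fin g) × Fin (m k)) → ℂ) → ℂ)
    (t : ((k : Fin g) × Fin (m k)) → ℂ) (p : (k : Fin g) × Fin (m k)) : ℂ :=
  fderiv ℂ (qoPhi m b f) t (Pi.single p 1) / ((c p : ℂ) * t p ^ (c p - 1))

lemma qoVec_ne {g : ℕ} {m : Fin g → ℕ} (v : ((k : Fin g) × Fin (m k)) → ℂ) :
    ((v, (-1 : ℂ)) : (((k : Fin g) × Fin (m k)) → ℂ) × ℂ) ≠ 0 := by
  simp [Prod.ext_iff]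

instance {K V : Type*} [DivisionRing K] [AddCommGroup V] [Module K V] [TopologicalSpace V] :
    TopologicalSpace (Projectivization K V) :=
  inferInstanceAs (TopologicalSpace (Quotient (projectivizationSetoid K V)))

/-- The projectivized tangent map `G`. -/
def qoG {g : ℕ} (m : Fin g → ℕ) (b : Fin g → ((k : Fin g) × Fin (m k)) → ℕ)
    (c : ((k : Fin g) × Fin (m k)) → ℕ)
    (f : Fin g → (((k : Fin g) × Fin (m k)) → ℂ) → ℂ)
    (t : ((k : Fin g) × Fin (m k)) → ℂ) :
    Projectivization ℂ ((((k : Fin g) × Fin (m k)) → ℂ) × ℂ) :=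
  Projectivization.mk ℂ (fun p => qoXi m b c f t p, -1) (qoVec_ne _)

/-- The set of limits of tangents `Λ`. -/
def qoLambda {g : ℕ} (m : Fin g → ℕ) (b : Fin g → ((k : Fin g) × Fin (m k)) → ℕ)
    (c : ((k : Fin g) × Fin (m k)) → ℕ)
    (f : Fin g → (((k : Fin g) × Fin (m k)) → ℂ) → ℂ) :
    Set (Projectivization ℂ ((((k : Fin g) × Fin (m k)) → ℂ) × ℂ)) :=
  {ℓ | ∃ t : ℕ → ((k : Fin g) × Fin (m k)) → ℂ,
    (∀ n p, t n p ≠ 0) ∧ Tendsto t atTop (𝓝 0) ∧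
    Tendsto (fun n => qoG m b c f (t n)) atTop (𝓝 ℓ)}

/-- The exponent `a_{kij} = b_{kij}/c_{ij}`. -/
def qoExp {g : ℕ} (m : Fin g → ℕ) (b : Fin g → ((k : Fin g) × Fin (m k)) → ℕ)
    (c : ((k : Fin g) × Fin (m k)) → ℕ)
    (k : Fin g) (p : (k : Fin g) × Fin (m k)) : ℚ :=
  (b k p : ℚ) / (c p : ℚ)

/-! ### Auxiliary lemmas -/

section Monomial

variable {ι : Type*} [Fintype ι] [DecidableEq ι]

lemma monom_hasFDerivAt (e : ι → ℕ) (t : ι → ℂ) :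
    HasFDerivAt (fun t : ι → ℂ => ∏ q, t q ^ e q)
      (∑ i, (∏ j ∈ Finset.univ.erase i, t j ^ e j) •
        (((e i : ℂ) * t i ^ (e i - 1)) • (ContinuousLinearMap.proj i :
          (ι → ℂ) →L[ℂ] ℂ))) t := by
  have h : ∀ i ∈ Finset.univ, HasFDerivAt (fun t : ι → ℂ => t i ^ e i)
      (((e i : ℂ) * t i ^ (e i - 1)) • (ContinuousLinearMap.proj i : (ι → ℂ) →L[ℂ] ℂ)) t := by
    intro i _
    have h1 : HasDerivAt (fun x : ℂ => x ^ e i) ((e i : ℂ) * t i ^ (e i - 1)) (t i) :=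
      hasDerivAt_pow _ _
    have h2 := h1.hasFDerivAt.comp t
      ((ContinuousLinearMap.proj i : (ι → ℂ) →L[ℂ] ℂ)).hasFDerivAt
    refine h2.congr_fderiv ?_
    ext v
    simp [mul_comm]
  exact HasFDerivAt.finset_prod h

lemma monom_fderiv_apply (e : ι → ℕ) (t : ι → ℂ) (p : ι) :
    fderiv ℂ (fun t : ι → ℂ => ∏ q, t q ^ e q) t (Pi.single p 1)
      = (e p : ℂ) * t p ^ (e p - 1) * ∏ j ∈ Finset.univ.erase p, t j ^ e j := by
  rw [(monom_hasFDerivAt e t).fderiv]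
  rw [ContinuousLinearMap.sum_apply]
  rw [Finset.sum_eq_single p]
  · simp [mul_comm]
  · intro q _ hq
    simp [Pi.single_apply, hq]
  · simp

lemma monom_differentiableAt (e : ι → ℕ) (t : ι → ℂ) :
    DifferentiableAt ℂ (fun t : ι → ℂ => ∏ q, t q ^ e q) t :=
  (monom_hasFDerivAt e t).differentiableAt

omit [DecidableEq ι] in
lemma monom_analyticAt (e : ι → ℕ) (x : ι → ℂ) :
    AnalyticAt ℂ (fun t : ι → ℂ => ∏ q, t q ^ e q) x :=
  Finset.analyticAt_fun_prod _ fun i _ =>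
    ((ContinuousLinearMap.proj i : (ι → ℂ) →L[ℂ] ℂ).analyticAt x).pow _

end Monomial

section Eta

variable {W : Type*} [NormedAddCommGroup W] [NormedSpace ℂ W]

def etaFun : { v : W × ℂ // v ≠ 0 } → ℝ := fun v => ‖v.1.2‖ / (‖v.1.1‖ + ‖v.1.2‖)

omit [NormedSpace ℂ W] in
lemma etaFun_denpos (v : { v : W × ℂ // v ≠ 0 }) : 0 < ‖v.1.1‖ + ‖v.1.2‖ := by
  rcases v with ⟨⟨x, y⟩, hv⟩
  by_contra h
  push_neg at h
  have hx : ‖x‖ = 0 := le_antisymm (by nlinarith [norm_nonneg x, norm_nonneg y]) (norm_nonneg _)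
  have hy : ‖y‖ = 0 := by nlinarith [norm_nonneg x, norm_nonneg y]
  exact hv (by simp [Prod.ext_iff, norm_eq_zero.mp hx, norm_eq_zero.mp hy])

lemma etaFun_inv (a b : { v : W × ℂ // v ≠ 0 }) (t : ℂ) (h : (a : W × ℂ) = t • (b : W × ℂ)) :
    etaFun a = etaFun b := by
  have ht : t ≠ 0 := by
    rintro rfl
    exact a.2 (by simp [h])
  have h1 : (a : W × ℂ).1 = t • (b : W × ℂ).1 := by rw [h]; rfl
  have h2 : (a : W × ℂ).2 = t • (b : W × ℂ).2 := by rw [h]; rfl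
  unfold etaFun
  rw [h1, h2, norm_smul, norm_smul, ← mul_add]
  rw [mul_div_mul_left _ _ (by simpa using ht)]

def etaBar : Projectivization ℂ (W × ℂ) → ℝ :=
  Projectivization.lift etaFun fun a b t h => etaFun_inv a b t h

lemma etaBar_cont : Continuous (etaBar (W := W)) := by
  have hc : Continuous (etaFun (W := W)) := by
    apply Continuous.div
    · exact (continuous_norm.comp (continuous_snd.comp continuous_subtype_val))
    · exact ((continuous_norm.comp (continuous_fst.comp continuous_subtype_val)).add
        (continuous_norm.comp (continuous_snd.comp continuous_subtype_val)))
    · exact fun v => (etaFun_denpos v).ne'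
  exact hc.quotient_lift _

lemma etaBar_mk (v : W × ℂ) (hv : v ≠ 0) :
    etaBar (Projectivization.mk ℂ v hv) = ‖v.2‖ / (‖v.1‖ + ‖v.2‖) := rfl

lemma etaBar_rep_eq_zero {ℓ : Projectivization ℂ (W × ℂ)} (h : etaBar ℓ = 0) : ℓ.rep.2 = 0 := by
  have hrep := Projectivization.mk_rep ℓ
  rw [← hrep, etaBar_mk] at h
  have hd : 0 < ‖ℓ.rep.1‖ + ‖ℓ.rep.2‖ := etaFun_denpos ⟨ℓ.rep, ℓ.rep_nonzero⟩
  rw [div_eq_zero_iff] at h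
  rcases h with h | h
  · simpa using h
  · exact absurd h hd.ne'

end Eta

set_option maxHeartbeats 1600000 in
theorem qo_limits_eta_zero_of_sum_lt_one
    {g : ℕ} (hg : 0 < g) (m : Fin g → ℕ) (hm : ∀ k, 0 < m k)
    (b : Fin g → ((k : Fin g) × Fin (m k)) → ℕ)
    (c : ((k : Fin g) × Fin (m k)) → ℕ) (hc : ∀ p, 0 < c p)
    (hbpos : ∀ (k : Fin g) (p : (k : Fin g) × Fin (m k)), p.1 ≤ k → 0 < b k p)
    (hbzero : ∀ (k : Fin g) (p : (k : Fin g) × Fin (m k)), k < p.1 → b k p = 0)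
    (hbmono : ∀ (k k' : Fin g) (p : (k : Fin g) × Fin (m k)), k ≤ k' → b k p ≤ b k' p)
    (f : Fin g → (((k : Fin g) × Fin (m k)) → ℂ) → ℂ)
    (hf : ∀ k, AnalyticAt ℂ (f k) 0) (hf0 : ∀ k, f k 0 ≠ 0)
    (hlt : ∑ j : Fin (m ⟨0, hg⟩), qoExp m b c ⟨0, hg⟩ ⟨⟨0, hg⟩, j⟩ < 1) :
    ∀ ℓ ∈ qoLambda m b c f, ℓ.rep.2 = 0 := by
  intro ℓ hℓ
  obtain ⟨w, hwne, hw0, hG⟩ := hℓ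
  set k0 : Fin g := ⟨0, hg⟩ with hk0
  have hk0le : ∀ k : Fin g, k0 ≤ k := fun k => by simp [hk0, Fin.le_def]
  have hk0lt : ∀ k : Fin g, k ≠ k0 → k0 < k := by
    intro k hk
    rcases lt_or_eq_of_le (hk0le k) with h | h
    · exact h
    · exact absurd h.symm hk
  set M : (((k : Fin g) × Fin (m k)) → ℂ) → ℂ := fun t => ∏ q, t q ^ b k0 q with hMdef
  set u : (((k : Fin g) × Fin (m k)) → ℂ) → ℂ :=
    fun t => ∑ k, (∏ q, t q ^ (b k q - b k0 q)) * f k t with hudef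
  -- φ = M * u
  have hphi : qoPhi m b f = fun t => M t * u t := by
    funext t
    simp only [qoPhi, hudef, hMdef, Finset.mul_sum]
    refine Finset.sum_congr rfl fun k _ => ?_
    have hMk : qoMonom m b k t = (∏ q, t q ^ b k0 q) * ∏ q, t q ^ (b k q - b k0 q) := by
      rw [qoMonom, ← Finset.prod_mul_distrib]
      refine Finset.prod_congr rfl fun q _ => ?_
      rw [← pow_add, Nat.add_sub_cancel' (hbmono k0 k q (hk0le k))]
    rw [hMk]; ring
  -- analyticity of u and its value at 0
  have huA : AnalyticAt ℂ u 0 :=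
    Finset.analyticAt_fun_sum _ fun k _ => (monom_analyticAt _ _).mul (hf k)
  have hu0 : u 0 = f k0 0 := by
    have hu0' : u 0 = ∑ k, (∏ q : (k : Fin g) × Fin (m k), (0:ℂ) ^ (b k q - b k0 q)) * f k 0 := rfl
    rw [hu0', Finset.sum_eq_single k0]
    · have : ∀ q : (k : Fin g) × Fin (m k), (0 : ℂ) ^ (b k0 q - b k0 q) = 1 := by
        intro q; simp
      simp [this]
    · intro k _ hk
      have hp : (0 : ℂ) ^ (b k ⟨k, ⟨0, hm k⟩⟩ - b k0 ⟨k, ⟨0, hm k⟩⟩) = 0 := by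
        rw [hbzero k0 ⟨k, ⟨0, hm k⟩⟩ (hk0lt k hk)]
        rw [Nat.sub_zero]
        exact zero_pow (hbpos k ⟨k, ⟨0, hm k⟩⟩ le_rfl).ne'
      rw [Finset.prod_eq_zero (Finset.mem_univ (⟨k, ⟨0, hm k⟩⟩ : (k : Fin g) × Fin (m k)))]
      · ring
      · exact hp
    · simp
  -- the xi identity
  have hxi : ∀ n, AnalyticAt ℂ u (w n) → ∀ p : (k : Fin g) × Fin (m k),
      qoXi m b c f (w n) p * ((c p : ℂ) * w n p ^ c p)
        = M (w n) * ((b k0 p : ℂ) * u (w n) + w n p * fderiv ℂ u (w n) (Pi.single p 1)) := by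
    intro n hA p
    set t := w n with ht
    have htne : ∀ q, t q ≠ 0 := hwne n
    have hdM : DifferentiableAt ℂ M t := monom_differentiableAt _ t
    have hdu : DifferentiableAt ℂ u t := hA.differentiableAt
    have hD : fderiv ℂ (qoPhi m b f) t = M t • fderiv ℂ u t + u t • fderiv ℂ M t := by
      rw [hphi]
      exact fderiv_mul hdM hdu
    have hDapp : fderiv ℂ (qoPhi m b f) t (Pi.single p 1)
        = M t * fderiv ℂ u t (Pi.single p 1)
          + u t * ((b k0 p : ℂ) * t p ^ (b k0 p - 1)
            * ∏ j ∈ Finset.univ.erase p, t j ^ b k0 j) := by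
      rw [hD]
      simp only [ContinuousLinearMap.add_apply, ContinuousLinearMap.smul_apply, smul_eq_mul]
      congr 1
      congr 1
      exact monom_fderiv_apply (b k0) t p
    have hcp : (c p : ℂ) ≠ 0 := Nat.cast_ne_zero.mpr (hc p).ne'
    have htp : t p ≠ 0 := htne p
    have hane : (c p : ℂ) * t p ^ (c p - 1) ≠ 0 := mul_ne_zero hcp (pow_ne_zero _ htp)
    have hpow : t p ^ (c p - 1) * t p = t p ^ c p := by
      rw [← pow_succ, Nat.sub_add_cancel (hc p)]
    have hMsplit : t p ^ b k0 p * ∏ j ∈ Finset.univ.erase p, t j ^ b k0 j = M t := by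
      rw [hMdef]
      exact Finset.mul_prod_erase Finset.univ (fun q => t q ^ b k0 q) (Finset.mem_univ p)
    have key2 : (b k0 p : ℂ) * t p ^ (b k0 p - 1) * t p
        * ∏ j ∈ Finset.univ.erase p, t j ^ b k0 j = (b k0 p : ℂ) * M t := by
      rcases Nat.eq_zero_or_pos (b k0 p) with h | h
      · simp [h]
      · rw [mul_assoc ((b k0 p : ℂ)) _ _, ← pow_succ, Nat.sub_add_cancel h,
          mul_assoc, hMsplit]
    have e1 : qoXi m b c f t p
        = (M t * fderiv ℂ u t (Pi.single p 1)
            + u t * ((b k0 p : ℂ) * t p ^ (b k0 p - 1)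
              * ∏ j ∈ Finset.univ.erase p, t j ^ b k0 j)) / ((c p : ℂ) * t p ^ (c p - 1)) := by
      rw [qoXi, hDapp]
    rw [e1]
    rw [show (c p : ℂ) * t p ^ c p = ((c p : ℂ) * t p ^ (c p - 1)) * t p by
      rw [mul_assoc, hpow]]
    rw [← mul_assoc, div_mul_cancel₀ _ hane]
    linear_combination u t * key2
  -- convergence facts
  have hev_u : ∀ᶠ n in atTop, AnalyticAt ℂ u (w n) := hw0.eventually huA.eventually_analyticAt
  have huc : Tendsto (fun n => u (w n)) atTop (𝓝 (u 0)) := huA.continuousAt.tendsto.comp hw0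
  have hDuc : Tendsto (fun n => fderiv ℂ u (w n)) atTop (𝓝 (fderiv ℂ u 0)) :=
    huA.fderiv.continuousAt.tendsto.comp hw0
  have hwp : ∀ p : (k : Fin g) × Fin (m k), Tendsto (fun n => w n p) atTop (𝓝 0) := by
    intro p
    have h := ((continuous_apply p).tendsto (0 : ((k : Fin g) × Fin (m k)) → ℂ)).comp hw0
    exact h
  have hAp : ∀ p : (k : Fin g) × Fin (m k), Tendsto
      (fun n => (b k0 p : ℂ) * u (w n) + w n p * fderiv ℂ u (w n) (Pi.single p 1)) atTop
      (𝓝 ((b k0 p : ℂ) * f k0 0)) := by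
    intro p
    have h1 : Tendsto (fun n => (b k0 p : ℂ) * u (w n)) atTop (𝓝 ((b k0 p : ℂ) * f k0 0)) := by
      rw [← hu0]
      exact huc.const_mul _
    have h2 : Tendsto (fun n => fderiv ℂ u (w n) (Pi.single p 1)) atTop
        (𝓝 (fderiv ℂ u 0 (Pi.single p 1))) :=
      ((ContinuousLinearMap.apply ℂ ℂ (Pi.single p 1)).continuous.tendsto _).comp hDuc
    have h3 := (hwp p).mul h2
    rw [zero_mul] at h3
    simpa using h1.add h3
  -- positivity and limit of ‖M∘w‖
  have hMne : ∀ n, M (w n) ≠ 0 := by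
    intro n
    have : (∏ q, w n q ^ b k0 q) ≠ 0 :=
      Finset.prod_ne_zero_iff.mpr fun q _ => pow_ne_zero _ (hwne n q)
    exact this
  have hMnpos : ∀ n, 0 < ‖M (w n)‖ := fun n => norm_pos_iff.mpr (hMne n)
  have hM0 : M 0 = 0 := by
    have h0 : M 0 = ∏ q, (0 : ℂ) ^ b k0 q := by
      rw [hMdef]
      simp
    rw [h0]
    exact Finset.prod_eq_zero (Finset.mem_univ (⟨k0, ⟨0, hm k0⟩⟩ : (k : Fin g) × Fin (m k)))
      (zero_pow (hbpos k0 ⟨k0, ⟨0, hm k0⟩⟩ le_rfl).ne')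
  have hMlim : Tendsto (fun n => ‖M (w n)‖) atTop (𝓝 0) := by
    have hMc : ContinuousAt M 0 := (monom_analyticAt (b k0) 0).continuousAt
    have h := hMc.tendsto.comp hw0
    rw [hM0] at h
    simpa using h.norm
  -- eventual coordinatewise lower bound
  have hev_low : ∀ᶠ n in atTop, ∀ j : Fin (m k0),
      (b k0 ⟨k0, j⟩ : ℝ) * ‖f k0 0‖ / 2 / (c ⟨k0, j⟩) * ‖M (w n)‖
          / ‖w n ⟨k0, j⟩‖ ^ c ⟨k0, j⟩
        ≤ ‖qoXi m b c f (w n) ⟨k0, j⟩‖ := by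
    rw [eventually_all]
    intro j
    have hb0 : (0 : ℝ) < (b k0 ⟨k0, j⟩ : ℝ) := by exact_mod_cast hbpos k0 ⟨k0, j⟩ le_rfl
    have hL : (0 : ℝ) < (b k0 ⟨k0, j⟩ : ℝ) * ‖f k0 0‖ :=
      mul_pos hb0 (norm_pos_iff.mpr (hf0 k0))
    have hnormlim : Tendsto (fun n => ‖(b k0 ⟨k0, j⟩ : ℂ) * u (w n)
        + w n ⟨k0, j⟩ * fderiv ℂ u (w n) (Pi.single ⟨k0, j⟩ 1)‖) atTop
        (𝓝 ((b k0 ⟨k0, j⟩ : ℝ) * ‖f k0 0‖)) := by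
      have h := (hAp ⟨k0, j⟩).norm
      simpa [norm_mul, RCLike.norm_natCast] using h
    have hev1 := hnormlim.eventually (eventually_ge_nhds (by linarith :
      (b k0 ⟨k0, j⟩ : ℝ) * ‖f k0 0‖ / 2 < (b k0 ⟨k0, j⟩ : ℝ) * ‖f k0 0‖))
    filter_upwards [hev1, hev_u] with n h1 h2
    have hxieq := hxi n h2 ⟨k0, j⟩
    have hnorm_eq : ‖qoXi m b c f (w n) ⟨k0, j⟩‖ * ((c ⟨k0, j⟩ : ℝ) * ‖w n ⟨k0, j⟩‖ ^ c ⟨k0, j⟩)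
        = ‖M (w n)‖ * ‖(b k0 ⟨k0, j⟩ : ℂ) * u (w n)
            + w n ⟨k0, j⟩ * fderiv ℂ u (w n) (Pi.single ⟨k0, j⟩ 1)‖ := by
      have h := congrArg norm hxieq
      simpa [norm_mul, norm_pow, RCLike.norm_natCast] using h
    have hden : (0 : ℝ) < (c ⟨k0, j⟩ : ℝ) * ‖w n ⟨k0, j⟩‖ ^ c ⟨k0, j⟩ :=
      mul_pos (by exact_mod_cast hc ⟨k0, j⟩) (pow_pos (norm_pos_iff.mpr (hwne n ⟨k0, j⟩)) _)
    have hXeq : ‖qoXi m b c f (w n) ⟨k0, j⟩‖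
        = ‖M (w n)‖ * ‖(b k0 ⟨k0, j⟩ : ℂ) * u (w n)
            + w n ⟨k0, j⟩ * fderiv ℂ u (w n) (Pi.single ⟨k0, j⟩ 1)‖
          / ((c ⟨k0, j⟩ : ℝ) * ‖w n ⟨k0, j⟩‖ ^ c ⟨k0, j⟩) :=
      (eq_div_iff hden.ne').mpr hnorm_eq
    rw [hXeq]
    have hre : (b k0 ⟨k0, j⟩ : ℝ) * ‖f k0 0‖ / 2 / (c ⟨k0, j⟩) * ‖M (w n)‖
          / ‖w n ⟨k0, j⟩‖ ^ c ⟨k0, j⟩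
        = ‖M (w n)‖ * ((b k0 ⟨k0, j⟩ : ℝ) * ‖f k0 0‖ / 2)
          / ((c ⟨k0, j⟩ : ℝ) * ‖w n ⟨k0, j⟩‖ ^ c ⟨k0, j⟩) := by
      ring
    rw [hre]
    gcongr
  -- exponents
  set a : Fin (m k0) → ℝ := fun j => (b k0 ⟨k0, j⟩ : ℝ) / (c ⟨k0, j⟩) with hadef
  have hapos : ∀ j, 0 < a j := fun j => div_pos
    (by exact_mod_cast hbpos k0 ⟨k0, j⟩ le_rfl) (by exact_mod_cast hc ⟨k0, j⟩)
  set A : ℝ := ∑ j, a j with hAdef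
  have hne : Nonempty (Fin (m k0)) := ⟨⟨0, hm k0⟩⟩
  have hA0 : 0 < A := Finset.sum_pos (fun j _ => hapos j) Finset.univ_nonempty
  have hA1 : A < 1 := by
    have hq : ((∑ j : Fin (m k0), qoExp m b c k0 ⟨k0, j⟩ : ℚ) : ℝ) < 1 := by exact_mod_cast hlt
    have hAeq : A = ((∑ j : Fin (m k0), qoExp m b c k0 ⟨k0, j⟩ : ℚ) : ℝ) := by
      rw [hAdef]
      push_cast [qoExp, hadef]
      rfl
    rw [hAeq]
    exact hq
  -- product identity
  have hMprod : ∀ n, ∏ j : Fin (m k0), ‖w n ⟨k0, j⟩‖ ^ b k0 ⟨k0, j⟩ = ‖M (w n)‖ := by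
    intro n
    have h1 : ‖M (w n)‖ = ∏ q : (k : Fin g) × Fin (m k), ‖w n q‖ ^ b k0 q := by
      rw [hMdef]
      simp [norm_prod, norm_pow]
    have h2 : (∏ q : (k : Fin g) × Fin (m k), ‖w n q‖ ^ b k0 q)
        = ∏ k : Fin g, ∏ j : Fin (m k), ‖w n ⟨k, j⟩‖ ^ b k0 ⟨k, j⟩ := by
      rw [← Finset.univ_sigma_univ, Finset.prod_sigma]
    rw [h1, h2]
    refine Eq.symm (Finset.prod_eq_single
      (f := fun k => ∏ j : Fin (m k), ‖w n ⟨k, j⟩‖ ^ b k0 ⟨k, j⟩) k0 ?_ ?_)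
    · intro k _ hk
      refine Finset.prod_eq_one fun j _ => ?_
      rw [hbzero k0 ⟨k, j⟩ (hk0lt k hk), pow_zero]
    · intro h
      exact absurd (Finset.mem_univ _) h
  -- constants
  set κ : Fin (m k0) → ℝ := fun j => (b k0 ⟨k0, j⟩ : ℝ) * ‖f k0 0‖ / 2 / (c ⟨k0, j⟩) with hκdef
  have hκpos : ∀ j, 0 < κ j := by
    intro j
    have hb0 : (0 : ℝ) < (b k0 ⟨k0, j⟩ : ℝ) := by exact_mod_cast hbpos k0 ⟨k0, j⟩ le_rfl
    exact div_pos (div_pos (mul_pos hb0 (norm_pos_iff.mpr (hf0 k0))) two_pos)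
      (by exact_mod_cast hc ⟨k0, j⟩)
  set K : ℝ := ∏ j, κ j ^ a j with hKdef
  have hKpos : 0 < K := Finset.prod_pos fun j _ => Real.rpow_pos_of_pos (hκpos j) _
  -- eventual lower bound for the product
  have hSlow : ∀ᶠ n in atTop,
      K * ‖M (w n)‖ ^ (A - 1) ≤ ∏ j : Fin (m k0), ‖qoXi m b c f (w n) ⟨k0, j⟩‖ ^ a j := by
    filter_upwards [hev_low] with n hlow
    have hMn := hMnpos n
    have e1 : ∀ j : Fin (m k0), (κ j * ‖M (w n)‖ / ‖w n ⟨k0, j⟩‖ ^ c ⟨k0, j⟩) ^ a j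
        = κ j ^ a j * ‖M (w n)‖ ^ a j / ‖w n ⟨k0, j⟩‖ ^ b k0 ⟨k0, j⟩ := by
      intro j
      have hr : 0 < ‖w n ⟨k0, j⟩‖ := norm_pos_iff.mpr (hwne n ⟨k0, j⟩)
      rw [Real.div_rpow (by positivity) (by positivity),
        Real.mul_rpow (hκpos j).le hMn.le]
      congr 1
      rw [← Real.rpow_natCast (‖w n ⟨k0, j⟩‖) (c ⟨k0, j⟩), ← Real.rpow_mul hr.le,
        ← Real.rpow_natCast (‖w n ⟨k0, j⟩‖) (b k0 ⟨k0, j⟩)]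
      congr 1
      have hcne : (c ⟨k0, j⟩ : ℝ) ≠ 0 := by exact_mod_cast (hc ⟨k0, j⟩).ne'
      rw [hadef]
      field_simp
    have e2 : (∏ j : Fin (m k0), (κ j * ‖M (w n)‖ / ‖w n ⟨k0, j⟩‖ ^ c ⟨k0, j⟩) ^ a j)
        = K * ‖M (w n)‖ ^ (A - 1) := by
      rw [Finset.prod_congr rfl (fun j _ => e1 j), Finset.prod_div_distrib,
        Finset.prod_mul_distrib, ← Real.rpow_sum_of_pos hMn, hMprod n, ← hAdef, ← hKdef,
        Real.rpow_sub hMn, Real.rpow_one]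
      ring
    rw [← e2]
    refine Finset.prod_le_prod (fun j _ => ?_) (fun j _ => ?_)
    · have hr : 0 < ‖w n ⟨k0, j⟩‖ := norm_pos_iff.mpr (hwne n ⟨k0, j⟩)
      have : 0 < κ j * ‖M (w n)‖ / ‖w n ⟨k0, j⟩‖ ^ c ⟨k0, j⟩ :=
        div_pos (mul_pos (hκpos j) hMn) (pow_pos hr _)
      exact (Real.rpow_pos_of_pos this _).le
    · exact Real.rpow_le_rpow
        (le_of_lt (div_pos (mul_pos (hκpos j) hMn)
          (pow_pos (norm_pos_iff.mpr (hwne n ⟨k0, j⟩)) _)))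
        (hlow j) (hapos j).le
  -- eventual upper bound by the sup norm
  have hSup : ∀ᶠ n in atTop,
      (∏ j : Fin (m k0), ‖qoXi m b c f (w n) ⟨k0, j⟩‖ ^ a j)
        ≤ ‖(fun p => qoXi m b c f (w n) p)‖ ^ A
      ∧ 0 < ‖(fun p => qoXi m b c f (w n) p)‖ := by
    filter_upwards [hev_low] with n hlow
    have hcoord : ∀ j : Fin (m k0),
        ‖qoXi m b c f (w n) ⟨k0, j⟩‖ ≤ ‖(fun p => qoXi m b c f (w n) p)‖ := by
      intro j
      simpa using norm_le_pi_norm (fun p => qoXi m b c f (w n) p) ⟨k0, j⟩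
    have hSpos : 0 < ‖(fun p => qoXi m b c f (w n) p)‖ := by
      set j0 : Fin (m k0) := ⟨0, hm k0⟩
      have h1 : 0 < κ j0 * ‖M (w n)‖ / ‖w n ⟨k0, j0⟩‖ ^ c ⟨k0, j0⟩ :=
        div_pos (mul_pos (hκpos j0) (hMnpos n))
          (pow_pos (norm_pos_iff.mpr (hwne n ⟨k0, j0⟩)) _)
      exact h1.trans_le ((hlow j0).trans (hcoord j0))
    refine ⟨?_, hSpos⟩
    calc (∏ j : Fin (m k0), ‖qoXi m b c f (w n) ⟨k0, j⟩‖ ^ a j)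
        ≤ ∏ j : Fin (m k0), ‖(fun p => qoXi m b c f (w n) p)‖ ^ a j :=
          Finset.prod_le_prod (fun j _ => Real.rpow_nonneg (norm_nonneg _) _)
            (fun j _ => Real.rpow_le_rpow (norm_nonneg _) (hcoord j) (hapos j).le)
      _ = ‖(fun p => qoXi m b c f (w n) p)‖ ^ A := by
          rw [← Real.rpow_sum_of_pos hSpos, ← hAdef]
  -- the tendsto chain
  have hT1 : Tendsto (fun n => ‖M (w n)‖ ^ (A - 1)) atTop atTop := by
    have hinv : Tendsto (fun n => (‖M (w n)‖)⁻¹) atTop atTop :=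
      Filter.Tendsto.inv_tendsto_nhdsGT_zero
        (tendsto_nhdsWithin_iff.mpr ⟨hMlim, Eventually.of_forall fun n => hMnpos n⟩)
    have h2 := (tendsto_rpow_atTop (by linarith : (0 : ℝ) < 1 - A)).comp hinv
    refine h2.congr fun n => ?_
    show (‖M (w n)‖⁻¹) ^ (1 - A) = ‖M (w n)‖ ^ (A - 1)
    rw [Real.inv_rpow (norm_nonneg _), ← Real.rpow_neg (norm_nonneg _)]
    norm_num
  have hT2 : Tendsto (fun n => ∏ j : Fin (m k0), ‖qoXi m b c f (w n) ⟨k0, j⟩‖ ^ a j)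
      atTop atTop :=
    tendsto_atTop_mono' atTop hSlow (hT1.const_mul_atTop hKpos)
  have hT3 : Tendsto (fun n => ‖(fun p => qoXi m b c f (w n) p)‖ ^ A) atTop atTop :=
    tendsto_atTop_mono' atTop (hSup.mono fun n h => h.1) hT2
  have hT4 : Tendsto (fun n => ‖(fun p => qoXi m b c f (w n) p)‖) atTop atTop := by
    have h2 := (tendsto_rpow_atTop (inv_pos.mpr hA0)).comp hT3
    refine h2.congr' ?_
    filter_upwards [hSup] with n hn
    show (‖(fun p => qoXi m b c f (w n) p)‖ ^ A) ^ A⁻¹ = _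
    rw [← Real.rpow_mul (norm_nonneg _), mul_inv_cancel₀ hA0.ne', Real.rpow_one]
  -- conclusion via etaBar
  have hval : ∀ n, etaBar (qoG m b c f (w n))
      = 1 / (‖(fun p => qoXi m b c f (w n) p)‖ + 1) := by
    intro n
    show etaBar (Projectivization.mk ℂ (fun p => qoXi m b c f (w n) p, -1) (qoVec_ne _)) = _
    rw [etaBar_mk]
    norm_num
  have hlim0 : Tendsto (fun n => etaBar (qoG m b c f (w n))) atTop (𝓝 0) := by
    have h1 : Tendsto (fun n => 1 / (‖(fun p => qoXi m b c f (w n) p)‖ + 1)) atTop (𝓝 0) :=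
      Tendsto.div_atTop tendsto_const_nhds (tendsto_atTop_add_const_right _ 1 hT4)
    exact h1.congr fun n => (hval n).symm
  have hbarlim : Tendsto (fun n => etaBar (qoG m b c f (w n))) atTop (𝓝 (etaBar ℓ)) :=
    (etaBar_cont.tendsto ℓ).comp hG
  exact etaBar_rep_eq_zero (tendsto_nhds_unique hbarlim hlim0)

end
end

section
/- In the quasi-ordinary setup below, let I ⊆ {1, …, m_1} satisfy ∑_{j ∈ I} a_{11j} = 1 and assume ∑_{j=1}^{m_1} a_{11j} > 1. Then Λ ⊆ {∏_{j ∈ I} ξ_{1j} = 0}: every point ℓ ∈ Λ has homogeneous coordinate ξ_{1j} equal to 0 for at least one j ∈ I. -/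
open Filter Topology

noncomputable section

section QOAux
open Finset
variable {g : ℕ} {m : Fin g → ℕ}

lemma qoMonom_hasFDerivAt (b : Fin g → ((k : Fin g) × Fin (m k)) → ℕ) (k : Fin g)
    (t : ((k : Fin g) × Fin (m k)) → ℂ) :
    HasFDerivAt (qoMonom m b k)
      (∑ p : (k : Fin g) × Fin (m k), (∏ q ∈ Finset.univ.erase p, t q ^ b k q) •
        (((b k p : ℂ) * t p ^ (b k p - 1)) •
          (ContinuousLinearMap.proj p : (((k : Fin g) × Fin (m k)) → ℂ) →L[ℂ] ℂ))) t := by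
  exact HasFDerivAt.finset_prod fun p _ =>
    (hasDerivAt_pow (b k p) (t p)).comp_hasFDerivAt t
      ((ContinuousLinearMap.proj p :
        (((k : Fin g) × Fin (m k)) → ℂ) →L[ℂ] ℂ).hasFDerivAt (x := t))

lemma qoMonom_fderiv_mul (b : Fin g → ((k : Fin g) × Fin (m k)) → ℕ) (k : Fin g)
    (t : ((k : Fin g) × Fin (m k)) → ℂ) (p : (k : Fin g) × Fin (m k)) :
    (∑ p' : (k : Fin g) × Fin (m k), (∏ q ∈ Finset.univ.erase p', t q ^ b k q) •
        (((b k p' : ℂ) * t p' ^ (b k p' - 1)) •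
          (ContinuousLinearMap.proj p' : (((k : Fin g) × Fin (m k)) → ℂ) →L[ℂ] ℂ)))
      (Pi.single p 1) * t p = (b k p : ℂ) * qoMonom m b k t := by
  rw [ContinuousLinearMap.sum_apply]
  rw [Finset.sum_eq_single p]
  · simp only [ContinuousLinearMap.smul_apply, ContinuousLinearMap.proj_apply,
      Pi.single_eq_same, smul_eq_mul, mul_one]
    rcases Nat.eq_zero_or_pos (b k p) with h0 | hpos
    · simp [h0]
    · have h : t p ^ (b k p - 1) * t p = t p ^ b k p := by
        rw [← pow_succ]
        congr 1
        omega
      rw [qoMonom, ← Finset.mul_prod_erase Finset.univ _ (Finset.mem_univ p)]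
      calc (∏ q ∈ univ.erase p, t q ^ b k q) * (↑(b k p) * t p ^ (b k p - 1)) * t p
          = (↑(b k p) : ℂ) * ((t p ^ (b k p - 1) * t p) * ∏ q ∈ univ.erase p, t q ^ b k q) := by
            ring
        _ = _ := by rw [h]
  · intro q _ hq
    simp [ContinuousLinearMap.smul_apply, ContinuousLinearMap.proj_apply,
      Pi.single_eq_of_ne hq]
  · intro h; exact absurd (Finset.mem_univ p) h

lemma qoPhi_fderiv_mul {f : Fin g → (((k : Fin g) × Fin (m k)) → ℂ) → ℂ}
    {t : ((k : Fin g) × Fin (m k)) → ℂ}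
    (b : Fin g → ((k : Fin g) × Fin (m k)) → ℕ)
    (hd : ∀ k, DifferentiableAt ℂ (f k) t) (p : (k : Fin g) × Fin (m k)) :
    fderiv ℂ (qoPhi m b f) t (Pi.single p 1) * t p
      = ∑ k, ((b k p : ℂ) * qoMonom m b k t * f k t
          + qoMonom m b k t * (fderiv ℂ (f k) t (Pi.single p 1) * t p)) := by
  have hφ : HasFDerivAt (qoPhi m b f)
      (∑ k, (qoMonom m b k t • fderiv ℂ (f k) t + f k t •
        (∑ p' : (k : Fin g) × Fin (m k), (∏ q ∈ Finset.univ.erase p', t q ^ b k q) •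
          (((b k p' : ℂ) * t p' ^ (b k p' - 1)) •
            (ContinuousLinearMap.proj p' : (((k : Fin g) × Fin (m k)) → ℂ) →L[ℂ] ℂ))))) t :=
    HasFDerivAt.fun_sum fun k _ => (qoMonom_hasFDerivAt b k t).mul (hd k).hasFDerivAt
  rw [hφ.fderiv, ContinuousLinearMap.sum_apply, Finset.sum_mul]
  refine Finset.sum_congr rfl fun k _ => ?_
  rw [ContinuousLinearMap.add_apply, ContinuousLinearMap.smul_apply,
    ContinuousLinearMap.smul_apply, add_mul, smul_eq_mul, smul_eq_mul, mul_assoc]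
  rw [mul_assoc, qoMonom_fderiv_mul b k t p]
  ring

lemma rpow_finset_sum {x : ℝ} (hx : 0 < x) {ι : Type*} (s : Finset ι) (a : ι → ℝ) :
    x ^ (∑ i ∈ s, a i) = ∏ i ∈ s, x ^ a i := by
  classical
  induction s using Finset.induction with
  | empty => simp
  | @insert a s h ih =>
    rw [Finset.sum_insert h, Finset.prod_insert h, Real.rpow_add hx, ih]

lemma qoMonom_norm_le (b : Fin g → ((k : Fin g) × Fin (m k)) → ℕ) (k k0 : Fin g)
    (hb : ∀ p, b k0 p ≤ b k p) (t : ((k : Fin g) × Fin (m k)) → ℂ)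
    (ht : ∀ p, ‖t p‖ ≤ 1) :
    ‖qoMonom m b k t‖ ≤ ‖qoMonom m b k0 t‖ := by
  unfold qoMonom
  rw [norm_prod, norm_prod]
  refine Finset.prod_le_prod (fun p _ => by positivity) fun p _ => ?_
  rw [norm_pow, norm_pow]
  exact pow_le_pow_of_le_one (norm_nonneg _) (ht p) (hb p)

lemma qoMonom_norm_pos (b : Fin g → ((k : Fin g) × Fin (m k)) → ℕ) (k : Fin g)
    (t : ((k : Fin g) × Fin (m k)) → ℂ) (ht : ∀ p, t p ≠ 0) :
    0 < ‖qoMonom m b k t‖ := by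
  rw [norm_pos_iff]
  exact Finset.prod_ne_zero_iff.mpr fun p _ => pow_ne_zero _ (ht p)

lemma qoXi_norm_le (b : Fin g → ((k : Fin g) × Fin (m k)) → ℕ)
    (c : ((k : Fin g) × Fin (m k)) → ℕ)
    (f : Fin g → (((k : Fin g) × Fin (m k)) → ℂ) → ℂ) (k0 : Fin g)
    (hb : ∀ k p, b k0 p ≤ b k p) (hc : ∀ p, 0 < c p)
    {t : ((k : Fin g) × Fin (m k)) → ℂ} (ht : ∀ p, t p ≠ 0) (hts : ∀ p, ‖t p‖ ≤ 1)
    (hd : ∀ k, DifferentiableAt ℂ (f k) t) (p : (k : Fin g) × Fin (m k)) :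
    ‖qoXi m b c f t p‖ ≤
      (∑ k, ((b k p : ℝ) * ‖f k t‖ + ‖fderiv ℂ (f k) t‖)) * ‖qoMonom m b k0 t‖
        / ‖t p‖ ^ c p := by
  set S : ℝ := ∑ k, ((b k p : ℝ) * ‖f k t‖ + ‖fderiv ℂ (f k) t‖) with hSdef
  set M1 : ℝ := ‖qoMonom m b k0 t‖ with hM1def
  have hM1 : 0 < M1 := qoMonom_norm_pos b k0 t ht
  have hS : 0 ≤ S := Finset.sum_nonneg fun k _ => by positivity
  have key : ‖fderiv ℂ (qoPhi m b f) t (Pi.single p 1)‖ * ‖t p‖ ≤ S * M1 := by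
    rw [← norm_mul, qoPhi_fderiv_mul b hd p]
    refine (norm_sum_le _ _).trans ?_
    rw [hSdef, Finset.sum_mul]
    refine Finset.sum_le_sum fun k _ => ?_
    have h1 : ‖qoMonom m b k t‖ ≤ M1 := qoMonom_norm_le b k k0 (hb k) t hts
    have h2 : ‖fderiv ℂ (f k) t (Pi.single p 1)‖ ≤ ‖fderiv ℂ (f k) t‖ := by
      calc ‖fderiv ℂ (f k) t (Pi.single p 1)‖
          ≤ ‖fderiv ℂ (f k) t‖ * ‖(Pi.single p 1 : ((k : Fin g) × Fin (m k)) → ℂ)‖ :=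
            (fderiv ℂ (f k) t).le_opNorm _
        _ = ‖fderiv ℂ (f k) t‖ := by rw [Pi.norm_single, norm_one, mul_one]
    have h3 : ‖t p‖ ≤ 1 := hts p
    have h4 : 0 ≤ ‖t p‖ := norm_nonneg _
    have h5 : 0 ≤ ‖qoMonom m b k t‖ := norm_nonneg _
    have h6 : 0 ≤ ‖f k t‖ := norm_nonneg _
    have h7 : 0 ≤ ‖fderiv ℂ (f k) t (Pi.single p 1)‖ := norm_nonneg _
    calc ‖(b k p : ℂ) * qoMonom m b k t * f k t
          + qoMonom m b k t * (fderiv ℂ (f k) t (Pi.single p 1) * t p)‖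
        ≤ ‖(b k p : ℂ) * qoMonom m b k t * f k t‖
          + ‖qoMonom m b k t * (fderiv ℂ (f k) t (Pi.single p 1) * t p)‖ := norm_add_le _ _
      _ = (b k p : ℝ) * ‖qoMonom m b k t‖ * ‖f k t‖
          + ‖qoMonom m b k t‖ * (‖fderiv ℂ (f k) t (Pi.single p 1)‖ * ‖t p‖) := by
            simp [norm_mul]
      _ ≤ ((b k p : ℝ) * ‖f k t‖ + ‖fderiv ℂ (f k) t‖) * M1 := by
            have hb0 : (0:ℝ) ≤ (b k p : ℝ) := by positivity
            nlinarith [mul_le_mul_of_nonneg_left h1 hb0,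
              mul_le_of_le_one_right h7 h3, (norm_nonneg (fderiv ℂ (f k) t))]
  have htp : 0 < ‖t p‖ := norm_pos_iff.mpr (ht p)
  rw [qoXi, norm_div, norm_mul, norm_pow]
  have hnc : ‖((c p : ℕ) : ℂ)‖ = (c p : ℝ) := by simp
  rw [hnc]
  have hcr : (1:ℝ) ≤ (c p : ℝ) := by exact_mod_cast hc p
  have hA : 0 < ‖t p‖ ^ (c p - 1) := pow_pos htp _
  rw [div_le_div_iff₀ (by positivity) (by positivity)]
  have hsplit : ‖t p‖ ^ c p = ‖t p‖ ^ (c p - 1) * ‖t p‖ := by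
    rw [← pow_succ]
    congr 1
    have := hc p
    omega
  rw [hsplit]
  set D : ℝ := ‖fderiv ℂ (qoPhi m b f) t (Pi.single p 1)‖ with hD
  set A : ℝ := ‖t p‖ ^ (c p - 1) with hAd
  have e1 : D * (A * ‖t p‖) = (D * ‖t p‖) * A := by ring
  have e2 : (D * ‖t p‖) * A ≤ S * M1 * A := mul_le_mul_of_nonneg_right key hA.le
  have e3 : S * M1 * A ≤ S * M1 * ((c p : ℝ) * A) := by
    nlinarith [mul_nonneg (mul_nonneg hS hM1.le) hA.le]
  linarith

lemma wgm_le {ι σ : Type*} [Fintype σ] [DecidableEq σ] [Fintype ι] (e : ι ↪ σ) (I : Finset ι)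
    (u : σ → ℝ) (hu : ∀ p, 0 < u p) (B : σ → ℕ) (cc : σ → ℕ)
    (hcc : ∀ p, (cc p : ℝ) ≠ 0)
    (ha1 : ∑ j ∈ I, ((B (e j) : ℝ) / (cc (e j) : ℝ)) = 1)
    (j0 : ι) (hj0 : j0 ∈ I)
    (hmin : ∀ j ∈ I, (∏ p, u p ^ B p) / u (e j0) ^ cc (e j0) ≤
      (∏ p, u p ^ B p) / u (e j) ^ cc (e j)) :
    (∏ p, u p ^ B p) / u (e j0) ^ cc (e j0) ≤ ∏ p ∈ (I.map e)ᶜ, u p ^ B p := by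
  set M1 : ℝ := ∏ p, u p ^ B p with hM1
  have hM1pos : 0 < M1 := Finset.prod_pos fun p _ => pow_pos (hu p) _
  have hwpos : ∀ j : ι, 0 < M1 / u (e j) ^ cc (e j) :=
    fun j => div_pos hM1pos (pow_pos (hu _) _)
  set a : ι → ℝ := fun j => (B (e j) : ℝ) / (cc (e j) : ℝ) with hadef
  have ha0 : ∀ j, 0 ≤ a j := fun j => by positivity
  have step1 : M1 / u (e j0) ^ cc (e j0) ≤
      ∏ j ∈ I, (M1 / u (e j) ^ cc (e j)) ^ (a j) := by
    conv_lhs => rw [← Real.rpow_one (M1 / u (e j0) ^ cc (e j0))]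
    rw [← ha1, rpow_finset_sum (hwpos j0)]
    exact Finset.prod_le_prod (fun j _ => Real.rpow_nonneg (hwpos j0).le _)
      (fun j hj => Real.rpow_le_rpow (hwpos j0).le (hmin j hj) (ha0 j))
  refine step1.trans (le_of_eq ?_)
  have hstep : ∀ j ∈ I, (M1 / u (e j) ^ cc (e j)) ^ (a j) =
      M1 ^ (a j) / u (e j) ^ ((B (e j) : ℝ)) := by
    intro j _
    rw [Real.div_rpow hM1pos.le (pow_nonneg (hu _).le _)]
    congr 1
    rw [← Real.rpow_natCast (u (e j)) (cc (e j)), ← Real.rpow_mul (hu _).le]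
    congr 1
    rw [hadef]
    field_simp
    exact mul_div_cancel_left₀ _ (hcc (e j))
  rw [Finset.prod_congr rfl hstep, Finset.prod_div_distrib,
    ← rpow_finset_sum hM1pos, ha1, Real.rpow_one]
  have hexp : ∀ j ∈ I, u (e j) ^ ((B (e j) : ℕ) : ℝ) = u (e j) ^ (B (e j)) :=
    fun j _ => Real.rpow_natCast _ _
  rw [Finset.prod_congr rfl hexp]
  have hIprod : ∏ j ∈ I, u (e j) ^ B (e j) = ∏ p ∈ I.map e, u p ^ B p :=
    (Finset.prod_map I e (fun p => u p ^ B p)).symm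
  rw [hIprod]
  have hsplit : M1 = (∏ p ∈ I.map e, u p ^ B p) * ∏ p ∈ (I.map e)ᶜ, u p ^ B p := by
    rw [hM1, ← Finset.prod_mul_prod_compl (I.map e)]
  rw [hsplit]
  have hprodpos : (0:ℝ) < ∏ p ∈ I.map e, u p ^ B p :=
    Finset.prod_pos fun p _ => pow_pos (hu p) _
  rw [mul_comm, mul_div_assoc, div_self hprodpos.ne', mul_one]

def qoFraw (k0 : Fin g) (I : Finset (Fin (m k0)))
    (v : {v : ((((k : Fin g) × Fin (m k)) → ℂ) × ℂ) // v ≠ 0}) : ℝ :=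
  ∏ j ∈ I, ‖v.1.1 ⟨k0, j⟩‖ / ‖v.1‖

lemma qoFraw_respects (k0 : Fin g) (I : Finset (Fin (m k0))) :
    ∀ u v, projectivizationSetoid ℂ ((((k : Fin g) × Fin (m k)) → ℂ) × ℂ) u v →
      qoFraw k0 I u = qoFraw k0 I v := by
  intro u v h
  rw [Setoid.comap_rel, MulAction.orbitRel_apply, MulAction.mem_orbit_iff] at h
  obtain ⟨a, ha⟩ := h
  have hn : ‖(a : ℂ)‖ ≠ 0 := norm_ne_zero_iff.mpr a.ne_zero
  unfold qoFraw
  rw [← ha]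
  refine Finset.prod_congr rfl fun j _ => ?_
  rw [Units.smul_def, norm_smul, Prod.smul_fst, Pi.smul_apply, smul_eq_mul, norm_mul,
    mul_div_mul_left _ _ hn]

lemma qoFraw_continuous (k0 : Fin g) (I : Finset (Fin (m k0))) :
    Continuous (qoFraw k0 I) := by
  apply continuous_finset_prod
  intro j _
  exact ((continuous_norm.comp ((continuous_apply (⟨k0, j⟩ : (k : Fin g) × Fin (m k))).comp
    (continuous_fst.comp continuous_subtype_val))).div
    (continuous_norm.comp continuous_subtype_val) fun v => norm_ne_zero_iff.mpr v.2)

def qoF (k0 : Fin g) (I : Finset (Fin (m k0))) :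
    Projectivization ℂ ((((k : Fin g) × Fin (m k)) → ℂ) × ℂ) → ℝ :=
  Quotient.lift (qoFraw k0 I) (qoFraw_respects k0 I)

lemma qoF_mk (k0 : Fin g) (I : Finset (Fin (m k0)))
    (v : (((k : Fin g) × Fin (m k)) → ℂ) × ℂ) (hv : v ≠ 0) :
    qoF k0 I (Projectivization.mk ℂ v hv) = qoFraw k0 I ⟨v, hv⟩ := rfl

lemma qoF_continuous (k0 : Fin g) (I : Finset (Fin (m k0))) :
    Continuous (qoF k0 I) :=
  (qoFraw_continuous k0 I).quotient_lift _


end QOAux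

set_option maxHeartbeats 2000000 in
theorem qo_limits_prod_xi_zero_of_sum_eq_one_first
    {g : ℕ} (hg : 0 < g) (m : Fin g → ℕ) (hm : ∀ k, 0 < m k)
    (b : Fin g → ((k : Fin g) × Fin (m k)) → ℕ)
    (c : ((k : Fin g) × Fin (m k)) → ℕ) (hc : ∀ p, 0 < c p)
    (hbpos : ∀ (k : Fin g) (p : (k : Fin g) × Fin (m k)), p.1 ≤ k → 0 < b k p)
    (hbzero : ∀ (k : Fin g) (p : (k : Fin g) × Fin (m k)), k < p.1 → b k p = 0)
    (hbmono : ∀ (k k' : Fin g) (p : (k : Fin g) × Fin (m k)), k ≤ k' → b k p ≤ b k' p)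
    (f : Fin g → (((k : Fin g) × Fin (m k)) → ℂ) → ℂ)
    (hf : ∀ k, AnalyticAt ℂ (f k) 0) (hf0 : ∀ k, f k 0 ≠ 0)
    (I : Finset (Fin (m ⟨0, hg⟩)))
    (hI : ∑ j ∈ I, qoExp m b c ⟨0, hg⟩ ⟨⟨0, hg⟩, j⟩ = 1)
    (hgt : 1 < ∑ j : Fin (m ⟨0, hg⟩), qoExp m b c ⟨0, hg⟩ ⟨⟨0, hg⟩, j⟩) :
    ∀ ℓ ∈ qoLambda m b c f, ∃ j ∈ I, ℓ.rep.1 ⟨⟨0, hg⟩, j⟩ = 0 := by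
  classical
  intro ℓ hℓ
  obtain ⟨t, hne, ht0, hG⟩ := hℓ
  have hb0 : ∀ (k : Fin g) (p : (k : Fin g) × Fin (m k)), b ⟨0, hg⟩ p ≤ b k p :=
    fun k p => hbmono ⟨0, hg⟩ k p (by simp [Fin.le_def])
  have hni : I.Nonempty := by
    rcases I.eq_empty_or_nonempty with h | h
    · rw [h] at hI; simp at hI
    · exact h
  -- find an index outside `I` with positive exponent
  have hcompl : 0 < ∑ j ∈ Iᶜ, qoExp m b c ⟨0, hg⟩ ⟨⟨0, hg⟩, j⟩ := by
    have hsplit := Finset.sum_add_sum_compl I (fun j => qoExp m b c ⟨0, hg⟩ ⟨⟨0, hg⟩, j⟩)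
    rw [hI] at hsplit
    linarith [hgt]
  have hj1 : ∃ j ∈ Iᶜ, 0 < qoExp m b c ⟨0, hg⟩ ⟨⟨0, hg⟩, j⟩ := by
    by_contra hno
    push_neg at hno
    have : ∑ j ∈ Iᶜ, qoExp m b c ⟨0, hg⟩ ⟨⟨0, hg⟩, j⟩ ≤ 0 := Finset.sum_nonpos fun j hj => hno j hj
    linarith
  obtain ⟨j1, hj1c, hj1pos⟩ := hj1
  have hj1I : j1 ∉ I := by simpa using hj1c
  have hbq1 : 0 < b ⟨0, hg⟩ ⟨⟨0, hg⟩, j1⟩ := by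
    by_contra hbz
    push_neg at hbz
    have hz : b ⟨0, hg⟩ ⟨⟨0, hg⟩, j1⟩ = 0 := Nat.le_zero.mp hbz
    rw [qoExp, hz] at hj1pos
    simp at hj1pos
  -- real exponents
  have hcne : ∀ p : (k : Fin g) × Fin (m k), (c p : ℝ) ≠ 0 :=
    fun p => Nat.cast_ne_zero.mpr (hc p).ne'
  have ha0 : ∀ j : Fin (m ⟨0, hg⟩), (0:ℝ) ≤ (b ⟨0, hg⟩ ⟨⟨0, hg⟩, j⟩ : ℝ) / (c ⟨⟨0, hg⟩, j⟩ : ℝ) :=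
    fun j => by positivity
  have ha1 : ∑ j ∈ I, ((b ⟨0, hg⟩ ⟨⟨0, hg⟩, j⟩ : ℝ) / (c ⟨⟨0, hg⟩, j⟩ : ℝ)) = 1 := by
    have h := congrArg (fun q : ℚ => (q : ℝ)) hI
    push_cast [qoExp] at h
    exact h
  have hpj_inj : Function.Injective
      (fun j : Fin (m ⟨0, hg⟩) => (⟨⟨0, hg⟩, j⟩ : (k : Fin g) × Fin (m k))) := by
    intro x y hxy
    simpa using hxy
  -- eventual facts
  have hnorm_t : Tendsto (fun n => ‖t n‖) atTop (𝓝 0) := by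
    simpa using ht0.norm
  have E1 : ∀ᶠ n in atTop, ∀ p, ‖t n p‖ ≤ 1 :=
    (hnorm_t.eventually (eventually_le_nhds one_pos)).mono
      fun n hn p => (norm_le_pi_norm (t n) p).trans hn
  have E2 : ∀ᶠ n in atTop, ∀ k, DifferentiableAt ℂ (f k) (t n) :=
    eventually_all.mpr fun k => ht0.eventually
      ((hf k).eventually_analyticAt.mono fun x hx => hx.differentiableAt)
  have E3 : ∀ᶠ n in atTop, ∀ k, ‖f k (t n)‖ ≤ ‖f k 0‖ + 1 :=
    eventually_all.mpr fun k => by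
      have htd : Tendsto (fun n => ‖f k (t n)‖) atTop (𝓝 ‖f k 0‖) :=
        ((hf k).continuousAt.tendsto.comp ht0).norm
      exact htd.eventually (eventually_le_nhds (lt_add_one _))
  have E4 : ∀ᶠ n in atTop, ∀ k, ‖fderiv ℂ (f k) (t n)‖ ≤ ‖fderiv ℂ (f k) 0‖ + 1 :=
    eventually_all.mpr fun k => by
      have htd : Tendsto (fun n => ‖fderiv ℂ (f k) (t n)‖) atTop (𝓝 ‖fderiv ℂ (f k) 0‖) :=
        (((hf k).fderiv.continuousAt).tendsto.comp ht0).norm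
      exact htd.eventually (eventually_le_nhds (lt_add_one _))
  set B : ℕ := Finset.univ.sup
    (fun q : Fin g × ((k : Fin g) × Fin (m k)) => b q.1 q.2) with hBdef
  have hB : ∀ k p, b k p ≤ B := fun k p =>
    Finset.le_sup (f := fun q : Fin g × ((k : Fin g) × Fin (m k)) => b q.1 q.2)
      (Finset.mem_univ (k, p))
  set C : ℝ := ∑ k, ((B : ℝ) * (‖f k 0‖ + 1) + (‖fderiv ℂ (f k) 0‖ + 1)) with hCdef
  have hC0 : 0 ≤ C := Finset.sum_nonneg fun k _ => by positivity
  have Ebound : ∀ᶠ n in atTop, ∀ p, ‖qoXi m b c f (t n) p‖ ≤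
      C * (‖qoMonom m b ⟨0, hg⟩ (t n)‖ / ‖t n p‖ ^ c p) := by
    filter_upwards [E1, E2, E3, E4] with n h1 h2 h3 h4
    intro p
    have hx := qoXi_norm_le b c f ⟨0, hg⟩ hb0 hc (hne n) h1 h2 p
    have hSle : (∑ k, ((b k p : ℝ) * ‖f k (t n)‖ + ‖fderiv ℂ (f k) (t n)‖)) ≤ C := by
      rw [hCdef]
      refine Finset.sum_le_sum fun k _ => ?_
      have hbk : ((b k p : ℝ)) ≤ (B : ℝ) := Nat.cast_le.mpr (hB k p)
      have h3k := h3 k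
      have h4k := h4 k
      nlinarith [norm_nonneg (f k (t n)), norm_nonneg (fderiv ℂ (f k) (t n)),
        Nat.cast_nonneg (α := ℝ) (b k p)]
    refine hx.trans ?_
    rw [← mul_div_assoc]
    have hd : (0:ℝ) < ‖t n p‖ ^ c p := pow_pos (norm_pos_iff.mpr (hne n p)) _
    gcongr
  -- main eventual bound
  have EFn : ∀ᶠ n in atTop, qoF ⟨0, hg⟩ I (qoG m b c f (t n)) ≤
      C * ∏ p ∈ (I.map ⟨fun j => (⟨⟨0, hg⟩, j⟩ : (k : Fin g) × Fin (m k)), hpj_inj⟩)ᶜ,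
        ‖t n p‖ ^ b ⟨0, hg⟩ p := by
    filter_upwards [Ebound, E1] with n hbnd h1
    have hM1pos : 0 < ‖qoMonom m b ⟨0, hg⟩ (t n)‖ := qoMonom_norm_pos b ⟨0, hg⟩ (t n) (hne n)
    have hupos : ∀ j : Fin (m ⟨0, hg⟩), (0:ℝ) < ‖t n ⟨⟨0, hg⟩, j⟩‖ :=
      fun j => norm_pos_iff.mpr (hne n _)
    have hwpos : ∀ j : Fin (m ⟨0, hg⟩),
        (0:ℝ) < ‖qoMonom m b ⟨0, hg⟩ (t n)‖ / ‖t n ⟨⟨0, hg⟩, j⟩‖ ^ c ⟨⟨0, hg⟩, j⟩ :=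
      fun j => div_pos hM1pos (pow_pos (hupos j) _)
    obtain ⟨j0, hj0I, hj0min⟩ := I.exists_min_image
      (fun j => ‖qoMonom m b ⟨0, hg⟩ (t n)‖ / ‖t n ⟨⟨0, hg⟩, j⟩‖ ^ c ⟨⟨0, hg⟩, j⟩) hni
    have hFn : qoF ⟨0, hg⟩ I (qoG m b c f (t n)) =
        ∏ j ∈ I, ‖qoXi m b c f (t n) ⟨⟨0, hg⟩, j⟩‖ /
          ‖((fun p => qoXi m b c f (t n) p, -1) :
            (((k : Fin g) × Fin (m k)) → ℂ) × ℂ)‖ := rfl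
    set N : ℝ := ‖((fun p => qoXi m b c f (t n) p, -1) :
        (((k : Fin g) × Fin (m k)) → ℂ) × ℂ)‖ with hNdef
    have hN1 : (1:ℝ) ≤ N := by
      have h := norm_snd_le ((fun p => qoXi m b c f (t n) p, -1) :
        (((k : Fin g) × Fin (m k)) → ℂ) × ℂ)
      exact (le_of_eq (by simp : (1:ℝ) = ‖(-1:ℂ)‖)).trans h
    have hN0 : (0:ℝ) < N := lt_of_lt_of_le one_pos hN1
    have hcoordle : ∀ j : Fin (m ⟨0, hg⟩), ‖qoXi m b c f (t n) ⟨⟨0, hg⟩, j⟩‖ ≤ N := by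
      intro j
      have h' := norm_le_pi_norm (fun p => qoXi m b c f (t n) p) (⟨⟨0, hg⟩, j⟩ : (k : Fin g) × Fin (m k))
      exact h'.trans (norm_fst_le ((fun p => qoXi m b c f (t n) p, -1) :
        (((k : Fin g) × Fin (m k)) → ℂ) × ℂ))
    have s1 : (∏ j ∈ I, ‖qoXi m b c f (t n) ⟨⟨0, hg⟩, j⟩‖ / N) ≤
        ‖qoXi m b c f (t n) ⟨⟨0, hg⟩, j0⟩‖ / N := by
      rw [← Finset.mul_prod_erase I _ hj0I]
      have hrest : (∏ j ∈ I.erase j0, ‖qoXi m b c f (t n) ⟨⟨0, hg⟩, j⟩‖ / N) ≤ 1 :=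
        Finset.prod_le_one (fun j _ => by positivity)
          (fun j _ => (div_le_one hN0).mpr (hcoordle j))
      exact mul_le_of_le_one_right (by positivity) hrest
    have s2 : ‖qoXi m b c f (t n) ⟨⟨0, hg⟩, j0⟩‖ / N ≤ ‖qoXi m b c f (t n) ⟨⟨0, hg⟩, j0⟩‖ :=
      div_le_self (norm_nonneg _) hN1
    have s3 := hbnd (⟨⟨0, hg⟩, j0⟩ : (k : Fin g) × Fin (m k))
    have hMeq : ‖qoMonom m b ⟨0, hg⟩ (t n)‖ =
        ∏ p : (k : Fin g) × Fin (m k), ‖t n p‖ ^ b ⟨0, hg⟩ p := by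
      rw [qoMonom, norm_prod]
      exact Finset.prod_congr rfl fun p _ => norm_pow _ _
    have s4 : ‖qoMonom m b ⟨0, hg⟩ (t n)‖ / ‖t n ⟨⟨0, hg⟩, j0⟩‖ ^ c ⟨⟨0, hg⟩, j0⟩ ≤
        ∏ p ∈ (I.map ⟨fun j => (⟨⟨0, hg⟩, j⟩ : (k : Fin g) × Fin (m k)), hpj_inj⟩)ᶜ,
          ‖t n p‖ ^ b ⟨0, hg⟩ p := by
      rw [hMeq]
      refine wgm_le ⟨fun j => (⟨⟨0, hg⟩, j⟩ : (k : Fin g) × Fin (m k)), hpj_inj⟩ I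
        (fun p => ‖t n p‖) (fun p => norm_pos_iff.mpr (hne n p))
        (b ⟨0, hg⟩) c hcne ha1 j0 hj0I ?_
      intro j hj
      rw [← hMeq]
      exact hj0min j hj
    rw [hFn]
    refine (s1.trans (s2.trans (s3.trans ?_)))
    exact mul_le_mul_of_nonneg_left s4 hC0
  -- the complement product tends to zero
  have hq1c : (⟨⟨0, hg⟩, j1⟩ : (k : Fin g) × Fin (m k)) ∈
      (I.map ⟨fun j => (⟨⟨0, hg⟩, j⟩ : (k : Fin g) × Fin (m k)), hpj_inj⟩)ᶜ := by
    rw [Finset.mem_compl]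
    intro hmem
    rw [Finset.mem_map] at hmem
    obtain ⟨j, hj, hjeq⟩ := hmem
    have hjj : j = j1 := hpj_inj hjeq
    exact hj1I (hjj ▸ hj)
  have hco : Tendsto (fun n => ‖t n ⟨⟨0, hg⟩, j1⟩‖ ^ b ⟨0, hg⟩ ⟨⟨0, hg⟩, j1⟩)
      atTop (𝓝 0) := by
    have h0 : Tendsto (fun n => t n (⟨⟨0, hg⟩, j1⟩ : (k : Fin g) × Fin (m k)))
        atTop (𝓝 0) := by
      have := ((continuous_apply (⟨⟨0, hg⟩, j1⟩ : (k : Fin g) × Fin (m k))).tendsto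
        (0 : ((k : Fin g) × Fin (m k)) → ℂ)).comp ht0
      exact this
    have h1 := (h0.norm).pow (b ⟨0, hg⟩ ⟨⟨0, hg⟩, j1⟩)
    simpa [zero_pow hbq1.ne'] using h1
  have hW0 : Tendsto (fun n =>
      ∏ p ∈ (I.map ⟨fun j => (⟨⟨0, hg⟩, j⟩ : (k : Fin g) × Fin (m k)), hpj_inj⟩)ᶜ,
        ‖t n p‖ ^ b ⟨0, hg⟩ p) atTop (𝓝 0) := by
    refine squeeze_zero'
      (Eventually.of_forall fun n => Finset.prod_nonneg fun p _ => by positivity) ?_ hco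
    filter_upwards [E1] with n h1
    rw [← Finset.mul_prod_erase _ _ hq1c]
    have hrest : ∏ p ∈ ((I.map ⟨fun j => (⟨⟨0, hg⟩, j⟩ : (k : Fin g) × Fin (m k)),
          hpj_inj⟩)ᶜ).erase ⟨⟨0, hg⟩, j1⟩, ‖t n p‖ ^ b ⟨0, hg⟩ p ≤ 1 :=
      Finset.prod_le_one (fun p _ => by positivity)
        (fun p _ => pow_le_one₀ (norm_nonneg _) (h1 p))
    exact mul_le_of_le_one_right (by positivity) hrest
  have hCW : Tendsto (fun n => C *
      ∏ p ∈ (I.map ⟨fun j => (⟨⟨0, hg⟩, j⟩ : (k : Fin g) × Fin (m k)), hpj_inj⟩)ᶜ,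
        ‖t n p‖ ^ b ⟨0, hg⟩ p) atTop (𝓝 0) := by
    simpa using hW0.const_mul C
  have hFnn : ∀ n, 0 ≤ qoF ⟨0, hg⟩ I (qoG m b c f (t n)) := by
    intro n
    have hFn : qoF ⟨0, hg⟩ I (qoG m b c f (t n)) =
        ∏ j ∈ I, ‖qoXi m b c f (t n) ⟨⟨0, hg⟩, j⟩‖ /
          ‖((fun p => qoXi m b c f (t n) p, -1) :
            (((k : Fin g) × Fin (m k)) → ℂ) × ℂ)‖ := rfl
    rw [hFn]
    exact Finset.prod_nonneg fun j _ => by positivity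
  have hFn0 : Tendsto (fun n => qoF ⟨0, hg⟩ I (qoG m b c f (t n))) atTop (𝓝 0) :=
    squeeze_zero' (Eventually.of_forall hFnn) EFn hCW
  have hlim : Tendsto (fun n => qoF ⟨0, hg⟩ I (qoG m b c f (t n))) atTop
      (𝓝 (qoF ⟨0, hg⟩ I ℓ)) :=
    ((qoF_continuous ⟨0, hg⟩ I).tendsto ℓ).comp hG
  have hzero : qoF ⟨0, hg⟩ I ℓ = 0 := tendsto_nhds_unique hlim hFn0
  have hrepr : qoF ⟨0, hg⟩ I ℓ = ∏ j ∈ I, ‖ℓ.rep.1 ⟨⟨0, hg⟩, j⟩‖ / ‖ℓ.rep‖ := by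
    conv_lhs => rw [← Projectivization.mk_rep ℓ]
    rfl
  rw [hrepr] at hzero
  obtain ⟨j, hjI, hj⟩ := Finset.prod_eq_zero_iff.mp hzero
  refine ⟨j, hjI, ?_⟩
  rcases div_eq_zero_iff.mp hj with h | h
  · exact norm_eq_zero.mp h
  · exact absurd h (norm_ne_zero_iff.mpr ℓ.rep_nonzero)


end
end

section
/- In the quasi-ordinary setup below, assume ∑_{i=1}^{m_1} a_{11i} = 1, and let (e_1, …, e_{m_1}) be the unique tuple of positive integers with gcd(e_1, …, e_{m_1}) = 1 and a_{11i} · ∑_{j=1}^{m_1} e_j = e_i for all i. Then Λ is contained in the cone defined by the homogeneous equation ∏_{i=1}^{m_1} ξ_{1i}^{e_i} − (−1)^{∑_j e_j} · f_1(0)^{∑_j e_j} · (∏_{j=1}^{m_1} a_{11j}^{e_j}) · η^{∑_j e_j} = 0; that is, every point of Λ satisfies this equation in its homogeneous coordinates. -/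
open Filter Topology

noncomputable section

lemma aux_hasFDerivAt_prod_pow {ι : Type*} [Fintype ι] [DecidableEq ι] (N : ι → ℕ) (t : ι → ℂ) :
    HasFDerivAt (fun s : ι → ℂ => ∏ q, s q ^ N q)
      (∑ q, (∏ r ∈ Finset.univ.erase q, t r ^ N r) •
        (((N q : ℂ) * t q ^ (N q - 1)) • (ContinuousLinearMap.proj q : (ι → ℂ) →L[ℂ] ℂ))) t :=
  HasFDerivAt.finset_prod fun q _ =>
    (hasDerivAt_pow (N q) (t q)).comp_hasFDerivAt t (hasFDerivAt_apply q t)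

lemma aux_apply_single {ι : Type*} [Fintype ι] [DecidableEq ι] (N : ι → ℕ) (t : ι → ℂ) (p : ι) :
    (∑ q, (∏ r ∈ Finset.univ.erase q, t r ^ N r) •
        (((N q : ℂ) * t q ^ (N q - 1)) • (ContinuousLinearMap.proj q : (ι → ℂ) →L[ℂ] ℂ)))
        (Pi.single p 1)
      = (∏ r ∈ Finset.univ.erase p, t r ^ N r) * ((N p : ℂ) * t p ^ (N p - 1)) := by
  rw [ContinuousLinearMap.sum_apply, Finset.sum_eq_single p]
  · simp
  · intro q _ hq
    simp [Pi.single_apply, hq]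
  · simp

lemma qoPhi_hasFDerivAt {g : ℕ} (m : Fin g → ℕ) (b : Fin g → ((k : Fin g) × Fin (m k)) → ℕ)
    (f : Fin g → (((k : Fin g) × Fin (m k)) → ℂ) → ℂ) (t : ((k : Fin g) × Fin (m k)) → ℂ)
    (hdf : ∀ k, DifferentiableAt ℂ (f k) t) :
    HasFDerivAt (qoPhi m b f)
      (∑ k, (qoMonom m b k t • fderiv ℂ (f k) t +
        f k t • (∑ q, (∏ r ∈ Finset.univ.erase q, t r ^ b k r) •
          (((b k q : ℂ) * t q ^ (b k q - 1)) •
            (ContinuousLinearMap.proj q : (((k : Fin g) × Fin (m k)) → ℂ) →L[ℂ] ℂ))))) t := by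
  apply HasFDerivAt.fun_sum
  intro k _
  exact (aux_hasFDerivAt_prod_pow (b k) t).mul ((hdf k).hasFDerivAt)

lemma qoPhi_fderiv_single {g : ℕ} (m : Fin g → ℕ) (b : Fin g → ((k : Fin g) × Fin (m k)) → ℕ)
    (f : Fin g → (((k : Fin g) × Fin (m k)) → ℂ) → ℂ) (t : ((k : Fin g) × Fin (m k)) → ℂ)
    (hdf : ∀ k, DifferentiableAt ℂ (f k) t) (p : (k : Fin g) × Fin (m k)) :
    fderiv ℂ (qoPhi m b f) t (Pi.single p 1) =
      ∑ k, (qoMonom m b k t * fderiv ℂ (f k) t (Pi.single p 1) +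
        f k t * ((∏ r ∈ Finset.univ.erase p, t r ^ b k r) *
          ((b k p : ℂ) * t p ^ (b k p - 1)))) := by
  rw [(qoPhi_hasFDerivAt m b f t hdf).fderiv, ContinuousLinearMap.sum_apply]
  refine Finset.sum_congr rfl fun k _ => ?_
  rw [ContinuousLinearMap.add_apply, ContinuousLinearMap.smul_apply,
    ContinuousLinearMap.smul_apply, aux_apply_single, smul_eq_mul, smul_eq_mul]

theorem qo_limits_contained_in_cone
    {g : ℕ} (hg : 0 < g) (m : Fin g → ℕ) (hm : ∀ k, 0 < m k)
    (b : Fin g → ((k : Fin g) × Fin (m k)) → ℕ)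
    (c : ((k : Fin g) × Fin (m k)) → ℕ) (hc : ∀ p, 0 < c p)
    (hbpos : ∀ (k : Fin g) (p : (k : Fin g) × Fin (m k)), p.1 ≤ k → 0 < b k p)
    (hbzero : ∀ (k : Fin g) (p : (k : Fin g) × Fin (m k)), k < p.1 → b k p = 0)
    (hbmono : ∀ (k k' : Fin g) (p : (k : Fin g) × Fin (m k)), k ≤ k' → b k p ≤ b k' p)
    (f : Fin g → (((k : Fin g) × Fin (m k)) → ℂ) → ℂ)
    (hf : ∀ k, AnalyticAt ℂ (f k) 0) (hf0 : ∀ k, f k 0 ≠ 0)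
    (heq : ∑ j : Fin (m ⟨0, hg⟩), qoExp m b c ⟨0, hg⟩ ⟨⟨0, hg⟩, j⟩ = 1)
    (e : Fin (m ⟨0, hg⟩) → ℕ) (hepos : ∀ i, 0 < e i) (hgcd : Finset.univ.gcd e = 1)
    (he : ∀ i, qoExp m b c ⟨0, hg⟩ ⟨⟨0, hg⟩, i⟩ * (∑ j, (e j : ℚ)) = (e i : ℚ))
 :
    ∀ ℓ ∈ qoLambda m b c f,
      ∏ i : Fin (m ⟨0, hg⟩), ℓ.rep.1 ⟨⟨0, hg⟩, i⟩ ^ e i =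
        (-1) ^ (∑ j, e j) * f ⟨0, hg⟩ 0 ^ (∑ j, e j) *
          (∏ j : Fin (m ⟨0, hg⟩), ((qoExp m b c ⟨0, hg⟩ ⟨⟨0, hg⟩, j⟩ : ℚ) : ℂ) ^ e j) *
          ℓ.rep.2 ^ (∑ j, e j) := by
  intro ℓ hl
  obtain ⟨t, ht0, htlim, hG⟩ := hl
  revert hepos hgcd he e
  set k0 : Fin g := ⟨0, hg⟩ with hk0
  intro e hepos hgcd he
  set E := ∑ j, e j with hEdef
  have hE : 0 < E := Finset.sum_pos (fun j _ => hepos j) ⟨⟨0, hm k0⟩, Finset.mem_univ _⟩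
  have hcne : ∀ p : (k : Fin g) × Fin (m k), (c p : ℂ) ≠ 0 :=
    fun p => Nat.cast_ne_zero.mpr (hc p).ne'
  have hk0le : ∀ k : Fin g, k0 ≤ k := fun k => by
    simp [hk0, Fin.le_def]
  have ha : ∀ i, ((qoExp m b c k0 ⟨k0, i⟩ : ℚ) : ℂ) = (b k0 ⟨k0, i⟩ : ℂ) / (c ⟨k0, i⟩ : ℂ) := by
    intro i
    rw [qoExp]
    push_cast
    ring
  -- arithmetic: b * E = c * e
  have hbe : ∀ i, b k0 ⟨k0, i⟩ * E = c ⟨k0, i⟩ * e i := by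
    intro i
    have h := he i
    rw [qoExp] at h
    have hcq : (c ⟨k0, i⟩ : ℚ) ≠ 0 := Nat.cast_ne_zero.mpr (hc _).ne'
    have hsum : (∑ j, (e j : ℚ)) = (E : ℚ) := by rw [hEdef]; push_cast; ring
    rw [hsum] at h
    have : (b k0 ⟨k0, i⟩ : ℚ) * E = (c ⟨k0, i⟩ : ℚ) * e i := by
      field_simp at h
      linarith [h]
    exact_mod_cast this
  have hM1ne : ∀ n, qoMonom m b k0 (t n) ≠ 0 := by
    intro n
    rw [qoMonom]
    exact Finset.prod_ne_zero_iff.mpr fun q _ => pow_ne_zero _ (ht0 n q)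
  -- the key monomial identity
  have hMon : ∀ s : ((k : Fin g) × Fin (m k)) → ℂ,
      qoMonom m b k0 s ^ E = ∏ i, s ⟨k0, i⟩ ^ (c ⟨k0, i⟩ * e i) := by
    intro s
    rw [qoMonom, ← Finset.prod_pow]
    simp_rw [← pow_mul]
    rw [← Finset.univ_sigma_univ, Finset.prod_sigma]
    rw [Finset.prod_eq_single_of_mem k0 (Finset.mem_univ _)]
    · exact Finset.prod_congr rfl fun i _ => by rw [hbe i]
    · intro k _ hk
      apply Finset.prod_eq_one
      intro j _
      have hlt : k0 < k := lt_of_le_of_ne (hk0le k) (Ne.symm hk)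
      rw [hbzero k0 ⟨k, j⟩ hlt, zero_mul, pow_zero]
  -- ratios of monomials
  set R : Fin g → (((k : Fin g) × Fin (m k)) → ℂ) → ℂ :=
    fun k s => ∏ q, s q ^ (b k q - b k0 q) with hRdef
  have hMk : ∀ (k : Fin g) (n : ℕ),
      qoMonom m b k (t n) = qoMonom m b k0 (t n) * R k (t n) := by
    intro k n
    rw [qoMonom, qoMonom, hRdef, ← Finset.prod_mul_distrib]
    refine Finset.prod_congr rfl fun q _ => ?_
    rw [← pow_add]
    congr 1
    have := hbmono k0 k q (hk0le k)
    omega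
  have hRcont : ∀ k, Continuous (R k) :=
    fun k => continuous_finset_prod _ fun q _ => (continuous_apply q).pow _
  have hR0 : ∀ k, k ≠ k0 → R k 0 = 0 := by
    intro k hk
    have hlt : k0 < k := lt_of_le_of_ne (hk0le k) (Ne.symm hk)
    rw [hRdef]
    refine Finset.prod_eq_zero (Finset.mem_univ (⟨k, ⟨0, hm k⟩⟩ : (k : Fin g) × Fin (m k))) ?_
    rw [Pi.zero_apply]
    refine zero_pow ?_
    have h1 := hbpos k ⟨k, ⟨0, hm k⟩⟩ le_rfl
    have h2 := hbzero k0 ⟨k, ⟨0, hm k⟩⟩ hlt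
    omega
  have hRk0 : R k0 0 = 1 := by simp [hRdef]
  -- eventual analyticity along the sequence
  have hev : ∀ᶠ n in atTop, ∀ k, AnalyticAt ℂ (f k) (t n) :=
    htlim.eventually (eventually_all.mpr fun k => (hf k).eventually_analyticAt)
  -- the normalized limit
  have hW : ∀ i : Fin (m k0),
      Tendsto (fun n => qoXi m b c f (t n) ⟨k0, i⟩ * t n ⟨k0, i⟩ ^ c ⟨k0, i⟩ /
          qoMonom m b k0 (t n)) atTop
        (𝓝 ((b k0 ⟨k0, i⟩ : ℂ) / (c ⟨k0, i⟩ : ℂ) * f k0 0)) := by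
    intro i
    have hS : Tendsto (fun n => ∑ k, R k (t n) *
        (((b k ⟨k0, i⟩ : ℂ) * f k (t n) +
          t n ⟨k0, i⟩ * fderiv ℂ (f k) (t n) (Pi.single ⟨k0, i⟩ 1)) / (c ⟨k0, i⟩ : ℂ)))
        atTop (𝓝 (∑ k, R k 0 *
        (((b k ⟨k0, i⟩ : ℂ) * f k 0 +
          0 * fderiv ℂ (f k) 0 (Pi.single ⟨k0, i⟩ 1)) / (c ⟨k0, i⟩ : ℂ)))) := by
      refine tendsto_finset_sum _ fun k _ => ?_
      have hfk : Tendsto (fun n => f k (t n)) atTop (𝓝 (f k 0)) :=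
        ((hf k).continuousAt.tendsto).comp htlim
      have htp : Tendsto (fun n => t n ⟨k0, i⟩) atTop (𝓝 0) := by
        have := ((continuous_apply (⟨k0, i⟩ : (k : Fin g) × Fin (m k))).tendsto
          (0 : ((k : Fin g) × Fin (m k)) → ℂ)).comp htlim
        exact this
      have hdfk : Tendsto (fun n => fderiv ℂ (f k) (t n) (Pi.single ⟨k0, i⟩ 1)) atTop
          (𝓝 (fderiv ℂ (f k) 0 (Pi.single ⟨k0, i⟩ 1))) := by
        have h1 : ContinuousAt (fderiv ℂ (f k)) 0 := (hf k).fderiv.continuousAt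
        exact ((ContinuousLinearMap.apply ℂ ℂ
          (Pi.single (⟨k0, i⟩ : (k : Fin g) × Fin (m k)) 1)).continuous.continuousAt.comp
            h1).tendsto.comp htlim
      exact (((hRcont k).tendsto 0).comp htlim).mul
        ((((tendsto_const_nhds.mul hfk).add (htp.mul hdfk)).div_const _))
    have hsum : (∑ k, R k 0 *
        (((b k ⟨k0, i⟩ : ℂ) * f k 0 +
          0 * fderiv ℂ (f k) 0 (Pi.single ⟨k0, i⟩ 1)) / (c ⟨k0, i⟩ : ℂ)))
        = (b k0 ⟨k0, i⟩ : ℂ) / (c ⟨k0, i⟩ : ℂ) * f k0 0 := by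
      rw [Finset.sum_eq_single k0]
      · rw [hRk0]; ring
      · intro k _ hk
        rw [hR0 k hk, zero_mul]
      · intro h
        exact absurd (Finset.mem_univ _) h
    rw [← hsum]
    refine Tendsto.congr' ?_ hS
    filter_upwards [hev] with n hn
    have hd : ∀ k, DifferentiableAt ℂ (f k) (t n) := fun k => (hn k).differentiableAt
    symm
    rw [qoXi, qoPhi_fderiv_single m b f (t n) hd ⟨k0, i⟩]
    rw [Finset.sum_div, Finset.sum_mul, Finset.sum_div]
    refine Finset.sum_congr rfl fun k _ => ?_
    have htp := ht0 n ⟨k0, i⟩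
    have hM1 := hM1ne n
    have hcp := hcne ⟨k0, i⟩
    have hpowc : t n ⟨k0, i⟩ ^ c ⟨k0, i⟩ = t n ⟨k0, i⟩ ^ (c ⟨k0, i⟩ - 1) * t n ⟨k0, i⟩ := by
      rw [← pow_succ]
      congr 1
      have := hc ⟨k0, i⟩
      omega
    have hMkeq : qoMonom m b k (t n) =
        t n ⟨k0, i⟩ ^ b k ⟨k0, i⟩ * ∏ r ∈ Finset.univ.erase ⟨k0, i⟩, t n r ^ b k r := by
      rw [qoMonom]
      exact (Finset.mul_prod_erase _ _ (Finset.mem_univ _)).symm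
    -- key algebraic identity
    have key : (qoMonom m b k (t n) * fderiv ℂ (f k) (t n) (Pi.single ⟨k0, i⟩ 1) +
        f k (t n) * ((∏ r ∈ Finset.univ.erase ⟨k0, i⟩, t n r ^ b k r) *
          ((b k ⟨k0, i⟩ : ℂ) * t n ⟨k0, i⟩ ^ (b k ⟨k0, i⟩ - 1)))) * t n ⟨k0, i⟩
        = qoMonom m b k (t n) *
          ((b k ⟨k0, i⟩ : ℂ) * f k (t n) +
            t n ⟨k0, i⟩ * fderiv ℂ (f k) (t n) (Pi.single ⟨k0, i⟩ 1)) := by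
      by_cases hb : b k ⟨k0, i⟩ = 0
      · simp only [hb, Nat.cast_zero, zero_mul, mul_zero, add_zero, zero_add]
        ring
      · have h1 : t n ⟨k0, i⟩ ^ (b k ⟨k0, i⟩ - 1) * t n ⟨k0, i⟩ = t n ⟨k0, i⟩ ^ b k ⟨k0, i⟩ := by
          rw [← pow_succ]
          congr 1
          omega
        linear_combination f k (t n) * (b k ⟨k0, i⟩ : ℂ) *
            (∏ r ∈ Finset.univ.erase ⟨k0, i⟩, t n r ^ b k r) * h1 -
          f k (t n) * (b k ⟨k0, i⟩ : ℂ) * hMkeq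
    rw [hpowc, div_mul_eq_mul_div, div_div, ← mul_div_assoc,
      div_eq_div_iff (mul_ne_zero (mul_ne_zero hcp (pow_ne_zero _ htp)) hM1) hcp]
    linear_combination (c ⟨k0, i⟩ : ℂ) * t n ⟨k0, i⟩ ^ (c ⟨k0, i⟩ - 1) * key +
      (c ⟨k0, i⟩ : ℂ) * t n ⟨k0, i⟩ ^ (c ⟨k0, i⟩ - 1) *
        ((b k ⟨k0, i⟩ : ℂ) * f k (t n) +
          t n ⟨k0, i⟩ * fderiv ℂ (f k) (t n) (Pi.single ⟨k0, i⟩ 1)) * hMk k n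
  -- the product identity and its limit
  have hxi : ∀ n, ∏ i, qoXi m b c f (t n) ⟨k0, i⟩ ^ e i
      = ∏ i, (qoXi m b c f (t n) ⟨k0, i⟩ * t n ⟨k0, i⟩ ^ c ⟨k0, i⟩ /
          qoMonom m b k0 (t n)) ^ e i := by
    intro n
    have hMn := hM1ne n
    simp_rw [div_pow, mul_pow, ← pow_mul]
    rw [Finset.prod_div_distrib, Finset.prod_mul_distrib, Finset.prod_pow_eq_pow_sum, ← hEdef,
      ← hMon (t n), mul_div_assoc, div_self (pow_ne_zero _ hMn), mul_one]
  have hprodlim : Tendsto (fun n => ∏ i, qoXi m b c f (t n) ⟨k0, i⟩ ^ e i) atTop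
      (𝓝 (∏ i, ((b k0 ⟨k0, i⟩ : ℂ) / (c ⟨k0, i⟩ : ℂ) * f k0 0) ^ e i)) := by
    refine Tendsto.congr (fun n => (hxi n).symm) ?_
    exact tendsto_finset_prod _ fun i _ => (hW i).pow (e i)
  -- the cone equation data
  set K : ℂ := (-1) ^ E * f k0 0 ^ E *
    ∏ j, ((qoExp m b c k0 ⟨k0, j⟩ : ℚ) : ℂ) ^ e j with hK
  set Q : ((((k : Fin g) × Fin (m k)) → ℂ) × ℂ) → ℂ :=
    fun v => ∏ i, v.1 ⟨k0, i⟩ ^ e i - K * v.2 ^ E with hQ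
  have hQc : Continuous Q := by
    refine Continuous.sub ?_ (continuous_const.mul (continuous_snd.pow E))
    exact continuous_finset_prod _ fun i _ =>
      ((continuous_apply (⟨k0, i⟩ : (k : Fin g) × Fin (m k))).comp continuous_fst).pow (e i)
  have hQhom : ∀ (s : ℂ) (v : (((k : Fin g) × Fin (m k)) → ℂ) × ℂ),
      Q (s • v) = s ^ E * Q v := by
    intro s v
    simp only [hQ, Prod.smul_fst, Prod.smul_snd, Pi.smul_apply, smul_eq_mul]
    rw [mul_sub]
    congr 1
    · simp_rw [mul_pow]
      rw [Finset.prod_mul_distrib, Finset.prod_pow_eq_pow_sum, ← hEdef]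
    · rw [mul_pow]
      ring
  -- the invariant function on projective space
  set Fn : Projectivization ℂ ((((k : Fin g) × Fin (m k)) → ℂ) × ℂ) → ℝ :=
    Projectivization.lift (fun v => ‖Q v.1‖ / ‖v.1‖ ^ E) (by
      rintro ⟨a, ha⟩ ⟨v, hv⟩ s (hav : a = s • v)
      have hs : s ≠ 0 := by
        rintro rfl
        rw [zero_smul] at hav
        exact ha hav
      simp only [hav]
      rw [hQhom, norm_mul, norm_pow, norm_smul, mul_pow, mul_div_mul_left]
      exact pow_ne_zero _ (norm_ne_zero_iff.mpr hs)) with hFn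
  have hFc : Continuous Fn := by
    rw [hFn]
    apply Continuous.quotient_lift
    refine Continuous.div ((hQc.comp continuous_subtype_val).norm)
      ((continuous_subtype_val.norm).pow E) ?_
    exact fun v => pow_ne_zero _ (norm_ne_zero_iff.mpr v.2)
  have hlim1 : Tendsto (fun n => Fn (qoG m b c f (t n))) atTop (𝓝 (Fn ℓ)) :=
    hFc.continuousAt.tendsto.comp hG
  -- the limit is zero
  have hQv : Tendsto (fun n => Q (fun p => qoXi m b c f (t n) p, -1)) atTop (𝓝 0) := by
    have hL : (∏ i, ((b k0 ⟨k0, i⟩ : ℂ) / (c ⟨k0, i⟩ : ℂ) * f k0 0) ^ e i)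
        = K * (-1 : ℂ) ^ E := by
      have hneg : ((-1 : ℂ)) ^ E * (-1 : ℂ) ^ E = 1 := by
        rw [← pow_add, ← two_mul, pow_mul]
        norm_num
      have hKprod : (∏ j, ((qoExp m b c k0 ⟨k0, j⟩ : ℚ) : ℂ) ^ e j)
          = ∏ j, ((b k0 ⟨k0, j⟩ : ℂ) / (c ⟨k0, j⟩ : ℂ)) ^ e j :=
        Finset.prod_congr rfl fun j _ => by rw [ha j]
      simp_rw [mul_pow]
      rw [Finset.prod_mul_distrib, Finset.prod_pow_eq_pow_sum, ← hEdef, hK, hKprod]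
      linear_combination -(f k0 0 ^ E * ∏ j, ((b k0 ⟨k0, j⟩ : ℂ) / (c ⟨k0, j⟩ : ℂ)) ^ e j) * hneg
    have h2 := hprodlim.sub (tendsto_const_nhds (x := K * (-1 : ℂ) ^ E))
    rw [hL, sub_self] at h2
    exact h2
  have hlow : ∀ n, (1 : ℝ) ≤ ‖((fun p => qoXi m b c f (t n) p, -1) :
      ((((k : Fin g) × Fin (m k)) → ℂ) × ℂ))‖ := by
    intro n
    have := norm_snd_le ((fun p => qoXi m b c f (t n) p, -1) :
      ((((k : Fin g) × Fin (m k)) → ℂ) × ℂ))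
    simpa using this
  have hlim2 : Tendsto (fun n => Fn (qoG m b c f (t n))) atTop (𝓝 0) := by
    have heqF : ∀ n, Fn (qoG m b c f (t n)) =
        ‖Q (fun p => qoXi m b c f (t n) p, -1)‖ /
          ‖((fun p => qoXi m b c f (t n) p, -1) :
            ((((k : Fin g) × Fin (m k)) → ℂ) × ℂ))‖ ^ E := fun n => rfl
    simp_rw [heqF]
    have hnorm : Tendsto (fun n => ‖Q (fun p => qoXi m b c f (t n) p, -1)‖) atTop (𝓝 0) := by
      have := hQv.norm
      simpa using this
    refine squeeze_zero (fun n => div_nonneg (norm_nonneg _) (by positivity)) (fun n => ?_) hnorm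
    exact div_le_self (norm_nonneg _) (one_le_pow₀ (hlow n))
  have hF0 : Fn ℓ = 0 := tendsto_nhds_unique hlim1 hlim2
  have hFrep : Fn ℓ = ‖Q ℓ.rep‖ / ‖ℓ.rep‖ ^ E := by
    conv_lhs => rw [← Projectivization.mk_rep ℓ]
    rfl
  rw [hFrep] at hF0
  have hrep : ℓ.rep ≠ 0 := ℓ.rep_nonzero
  have hden : (‖ℓ.rep‖ : ℝ) ^ E ≠ 0 := pow_ne_zero _ (norm_ne_zero_iff.mpr hrep)
  have hQrep : Q ℓ.rep = 0 := by
    rcases div_eq_zero_iff.mp hF0 with h | h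
    · exact norm_eq_zero.mp h
    · exact absurd h hden
  have hfinal : ∏ i, ℓ.rep.1 ⟨k0, i⟩ ^ e i = K * ℓ.rep.2 ^ E := by
    have h' : ∏ i, ℓ.rep.1 ⟨k0, i⟩ ^ e i - K * ℓ.rep.2 ^ E = 0 := hQrep
    linear_combination h'
  rw [hfinal, hK]

end
end

section
/- In the quasi-ordinary setup below, assume ∑_{i=1}^{m_1} a_{11i} < 1. Then there exists r_0 > 0 such that for all 0 < r ≤ r_0 the tangent cone of Y_r at 0 equals {(x, y) ∈ ℂ^n × ℂ : ∏_{j=1}^{m_1} x_{1j} = 0}, where x = (x_{kj})_{k,j}. -/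
open Filter Topology

noncomputable section

/-- The image `Y_r` of the polydisc of radius `r` under `t ↦ ((t_{kj}^{c_{kj}})_{kj}, φ(t))`. -/
def qoY {g : ℕ} (m : Fin g → ℕ) (b : Fin g → ((k : Fin g) × Fin (m k)) → ℕ)
    (c : ((k : Fin g) × Fin (m k)) → ℕ)
    (f : Fin g → (((k : Fin g) × Fin (m k)) → ℂ) → ℂ) (r : ℝ) :
    Set ((((k : Fin g) × Fin (m k)) → ℂ) × ℂ) :=
  (fun t => (fun p => t p ^ c p, qoPhi m b f t)) '' {t | ∀ p, ‖t p‖ < r}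


def qoFq {g : ℕ} (m : Fin g → ℕ) (b : Fin g → ((k : Fin g) × Fin (m k)) → ℕ)
    (k₀ : Fin g) (f : Fin g → (((k : Fin g) × Fin (m k)) → ℂ) → ℂ)
    (t : ((k : Fin g) × Fin (m k)) → ℂ) : ℂ :=
  ∑ k, (∏ p : (k : Fin g) × Fin (m k), t p ^ (b k p - b k₀ p)) * f k t

lemma qoPhi_factor {g : ℕ} (m : Fin g → ℕ) (b : Fin g → ((k : Fin g) × Fin (m k)) → ℕ)
    (k₀ : Fin g) (f : Fin g → (((k : Fin g) × Fin (m k)) → ℂ) → ℂ)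
    (hmono : ∀ k p, b k₀ p ≤ b k p) (t : ((k : Fin g) × Fin (m k)) → ℂ) :
    qoPhi m b f t = qoMonom m b k₀ t * qoFq m b k₀ f t := by
  unfold qoPhi qoFq qoMonom
  rw [Finset.mul_sum]
  refine Finset.sum_congr rfl fun k _ => ?_
  rw [← mul_assoc, ← Finset.prod_mul_distrib]
  congr 1
  refine Finset.prod_congr rfl fun p _ => ?_
  rw [← pow_add, Nat.add_sub_cancel' (hmono k p)]

lemma qoFq_zero {g : ℕ} (hg : 0 < g) (m : Fin g → ℕ) (hm : ∀ k, 0 < m k)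
    (b : Fin g → ((k : Fin g) × Fin (m k)) → ℕ)
    (hbpos : ∀ (k : Fin g) (p : (k : Fin g) × Fin (m k)), p.1 ≤ k → 0 < b k p)
    (hbzero : ∀ (k : Fin g) (p : (k : Fin g) × Fin (m k)), k < p.1 → b k p = 0)
    (f : Fin g → (((k : Fin g) × Fin (m k)) → ℂ) → ℂ) :
    qoFq m b ⟨0, hg⟩ f 0 = f ⟨0, hg⟩ 0 := by
  unfold qoFq
  rw [Finset.sum_eq_single ⟨0, hg⟩]
  · simp
  · intro k _ hk
    have hk0 : (⟨0, hg⟩ : Fin g) < k := by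
      have : 0 < k.val := Nat.pos_of_ne_zero (fun h => hk (Fin.ext h.symm).symm)
      simpa [Fin.lt_def] using this
    set p : (k : Fin g) × Fin (m k) := ⟨k, ⟨0, hm k⟩⟩
    have h1 : 0 < b k p := hbpos k p le_rfl
    have h2 : b ⟨0, hg⟩ p = 0 := hbzero _ p hk0
    have : (∏ q : (k : Fin g) × Fin (m k), (0:ℂ) ^ (b k q - b ⟨0, hg⟩ q)) = 0 := by
      apply Finset.prod_eq_zero (Finset.mem_univ p)
      rw [h2, Nat.sub_zero, zero_pow (by omega)]
    simp [this]
  · simp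

lemma qoFq_contAt {g : ℕ} (m : Fin g → ℕ) (b : Fin g → ((k : Fin g) × Fin (m k)) → ℕ)
    (k₀ : Fin g) (f : Fin g → (((k : Fin g) × Fin (m k)) → ℂ) → ℂ)
    (hf : ∀ k, AnalyticAt ℂ (f k) 0) :
    ContinuousAt (qoFq m b k₀ f) 0 := by
  unfold qoFq
  apply tendsto_finset_sum
  intro k _
  exact (Continuous.continuousAt (by continuity)).mul (hf k).continuousAt

lemma pow_tendsto_zero {u : ℕ → ℂ} {c : ℕ} (hc : 0 < c)
    (h : Tendsto (fun n => u n ^ c) atTop (𝓝 0)) : Tendsto u atTop (𝓝 0) := by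
  rw [tendsto_zero_iff_norm_tendsto_zero] at h ⊢
  simp only [norm_pow] at h
  have h2 : Tendsto (fun n => (‖u n‖ ^ c) ^ ((c : ℝ)⁻¹)) atTop (𝓝 ((0:ℝ) ^ ((c:ℝ)⁻¹))) :=
    ((Real.continuousAt_rpow_const 0 (c:ℝ)⁻¹ (Or.inr (by positivity))).tendsto).comp h
  rw [Real.zero_rpow (by positivity)] at h2
  refine h2.congr fun n => ?_
  rw [← Real.rpow_natCast (‖u n‖) c, ← Real.rpow_mul (norm_nonneg _),
    mul_inv_cancel₀ (by positivity), Real.rpow_one]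

lemma qo_subset
    {g : ℕ} (hg : 0 < g) (m : Fin g → ℕ) (hm : ∀ k, 0 < m k)
    (b : Fin g → ((k : Fin g) × Fin (m k)) → ℕ)
    (c : ((k : Fin g) × Fin (m k)) → ℕ) (hc : ∀ p, 0 < c p)
    (hbpos : ∀ (k : Fin g) (p : (k : Fin g) × Fin (m k)), p.1 ≤ k → 0 < b k p)
    (hbzero : ∀ (k : Fin g) (p : (k : Fin g) × Fin (m k)), k < p.1 → b k p = 0)
    (hbmono : ∀ (k k' : Fin g) (p : (k : Fin g) × Fin (m k)), k ≤ k' → b k p ≤ b k' p)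
    (f : Fin g → (((k : Fin g) × Fin (m k)) → ℂ) → ℂ)
    (hf : ∀ k, AnalyticAt ℂ (f k) 0) (hf0 : ∀ k, f k 0 ≠ 0)
    (hlt : ∑ j : Fin (m ⟨0, hg⟩), qoExp m b c ⟨0, hg⟩ ⟨⟨0, hg⟩, j⟩ < 1) (r : ℝ) :
    tangentConeAt ℂ (qoY m b c f r) 0 ⊆
      {q : (((k : Fin g) × Fin (m k)) → ℂ) × ℂ |
        ∏ j : Fin (m ⟨0, hg⟩), q.1 ⟨⟨0, hg⟩, j⟩ = 0} := by
  classical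
  intro v hv
  obtain ⟨C, D, hC, hmem, hCD⟩ := mem_tangentConeAt_iff_exists_seq_norm_tendsto_atTop.mp hv
  by_contra hprod
  simp only [Set.mem_setOf_eq] at hprod
  have hvj : ∀ j : Fin (m ⟨0, hg⟩), v.1 ⟨⟨0, hg⟩, j⟩ ≠ 0 := fun j hj =>
    hprod (Finset.prod_eq_zero (Finset.mem_univ j) hj)
  have hvj' : ∀ p : (k : Fin g) × Fin (m k), p.1 = ⟨0, hg⟩ → v.1 p ≠ 0 := by
    rintro ⟨k, j⟩ hk
    subst hk
    exact hvj j
  have hk0le : ∀ k : Fin g, (⟨0, hg⟩ : Fin g) ≤ k := fun k => by simp [Fin.le_def]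
  have hmem' : ∀ᶠ n in atTop, D n ∈ qoY m b c f r := by simpa using hmem
  -- choose preimages
  have key : ∀ n, ∃ t : ((k : Fin g) × Fin (m k)) → ℂ, D n ∈ qoY m b c f r →
      ((∀ p, ‖t p‖ < r) ∧ (fun p => t p ^ c p, qoPhi m b f t) = D n) := by
    intro n
    by_cases h : D n ∈ qoY m b c f r
    · obtain ⟨t, ht1, ht2⟩ := h
      exact ⟨t, fun _ => ⟨ht1, ht2⟩⟩
    · exact ⟨0, fun hh => absurd hh h⟩
  choose T hT using key
  have hTev : ∀ᶠ n in atTop,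
      (fun p => T n p ^ c p, qoPhi m b f (T n)) = D n := by
    filter_upwards [hmem'] with n hn
    exact (hT n hn).2
  -- component limits
  have hfst : ∀ p, Tendsto (fun n => C n * (T n p) ^ c p) atTop (𝓝 (v.1 p)) := by
    intro p
    have h1 : Tendsto (fun n => ((C n • D n).1 p)) atTop (𝓝 (v.1 p)) :=
      (((continuous_apply p).comp continuous_fst).tendsto v).comp hCD
    refine h1.congr' ?_
    filter_upwards [hTev] with n hn
    rw [← hn]
    simp [smul_eq_mul]
  have hsnd : Tendsto (fun n => C n * qoPhi m b f (T n)) atTop (𝓝 v.2) := by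
    have h1 : Tendsto (fun n => ((C n • D n).2)) atTop (𝓝 v.2) :=
      (continuous_snd.tendsto v).comp hCD
    refine h1.congr' ?_
    filter_upwards [hTev] with n hn
    rw [← hn]
    simp [smul_eq_mul]
  have hD0 : Tendsto D atTop (𝓝 0) := tangentConeAt.lim_zero atTop hC hCD
  have hT0 : ∀ p, Tendsto (fun n => T n p) atTop (𝓝 0) := by
    intro p
    refine pow_tendsto_zero (hc p) ?_
    have h1 : Tendsto (fun n => (D n).1 p) atTop (𝓝 0) := by
      have := (((continuous_apply p).comp continuous_fst).tendsto 0).comp hD0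
      simpa [Function.comp_def] using this
    refine h1.congr' ?_
    filter_upwards [hTev] with n hn
    rw [← hn]
  have hTpi : Tendsto T atTop (𝓝 0) := by
    rw [tendsto_pi_nhds]
    intro p
    simpa using hT0 p
  have hF : Tendsto (fun n => qoFq m b ⟨0, hg⟩ f (T n)) atTop (𝓝 (f ⟨0, hg⟩ 0)) := by
    have := (qoFq_contAt m b ⟨0, hg⟩ f hf).tendsto.comp hTpi
    rwa [qoFq_zero hg m hm b hbpos hbzero f] at this
  -- exponents
  set a : ((k : Fin g) × Fin (m k)) → ℝ := fun p => (b ⟨0, hg⟩ p : ℝ) / (c p : ℝ) with ha_def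
  have ha_nonneg : ∀ p, 0 ≤ a p := fun p => by positivity
  have ha0 : ∀ p : (k : Fin g) × Fin (m k), p.1 ≠ ⟨0, hg⟩ → a p = 0 := by
    intro p hp
    have : (⟨0, hg⟩ : Fin g) < p.1 := lt_of_le_of_ne (hk0le p.1) (Ne.symm hp)
    simp [ha_def, hbzero _ p this]
  set σ : ℝ := ∑ p : (k : Fin g) × Fin (m k), a p with hσ_def
  have hσlt : σ < 1 := by
    have h1 : σ = ∑ k : Fin g, ∑ j : Fin (m k), a ⟨k, j⟩ := by
      rw [hσ_def, ← Finset.univ_sigma_univ, Finset.sum_sigma]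
    have h2 : ∀ k : Fin g, k ≠ ⟨0, hg⟩ → ∑ j : Fin (m k), a ⟨k, j⟩ = 0 := by
      intro k hk
      exact Finset.sum_eq_zero fun j _ => ha0 ⟨k, j⟩ hk
    have h3 : σ = ∑ j : Fin (m ⟨0, hg⟩), a ⟨⟨0, hg⟩, j⟩ := by
      rw [h1, Finset.sum_eq_single ⟨0, hg⟩ (fun k _ hk => h2 k hk) (by simp)]
    have h4 : σ = ((∑ j : Fin (m ⟨0, hg⟩), qoExp m b c ⟨0, hg⟩ ⟨⟨0, hg⟩, j⟩ : ℚ) : ℝ) := by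
      rw [h3]
      push_cast [qoExp]
      rfl
    rw [h4]
    exact_mod_cast hlt
  have hσ0 : 0 ≤ σ := Finset.sum_nonneg fun p _ => ha_nonneg p
  -- the auxiliary product
  set P : ℕ → ℝ := fun n => ∏ p : (k : Fin g) × Fin (m k),
      (‖C n‖ * ‖T n p‖ ^ (c p)) ^ (a p) with hP_def
  have hPlim : Tendsto P atTop
      (𝓝 (∏ p : (k : Fin g) × Fin (m k), ‖v.1 p‖ ^ (a p))) := by
    apply tendsto_finset_prod
    intro p _
    have hbase : Tendsto (fun n => ‖C n‖ * ‖T n p‖ ^ (c p)) atTop (𝓝 ‖v.1 p‖) := by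
      have := (continuous_norm.tendsto (v.1 p)).comp (hfst p)
      refine this.congr fun n => ?_
      simp [norm_mul, norm_pow]
    exact ((Real.continuousAt_rpow_const _ _ (Or.inr (ha_nonneg p))).tendsto).comp hbase
  have hL : 0 < ∏ p : (k : Fin g) × Fin (m k), ‖v.1 p‖ ^ (a p) := by
    apply Finset.prod_pos
    intro p _
    by_cases hap : a p = 0
    · rw [hap, Real.rpow_zero]; exact one_pos
    · have hp1 : p.1 = ⟨0, hg⟩ := by
        by_contra h
        exact hap (ha0 p h)
      have : v.1 p ≠ 0 := hvj' p hp1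
      exact Real.rpow_pos_of_pos (norm_pos_iff.mpr this) _
  -- key norm identity
  have hkey : ∀ᶠ n in atTop, ‖C n * qoPhi m b f (T n)‖ =
      ‖C n‖ ^ (1 - σ) * P n * ‖qoFq m b ⟨0, hg⟩ f (T n)‖ := by
    filter_upwards [hC.eventually_ge_atTop 1] with n hn
    have hCpos : (0:ℝ) < ‖C n‖ := lt_of_lt_of_le one_pos hn
    have hfac := qoPhi_factor m b ⟨0, hg⟩ f (fun k p => hbmono ⟨0, hg⟩ k p (hk0le k)) (T n)
    rw [hfac, ← mul_assoc, norm_mul, norm_mul]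
    congr 1
    -- ‖C n‖ * ‖M₀(T n)‖ = ‖C n‖ ^ (1-σ) * P n
    have hM : ‖qoMonom m b ⟨0, hg⟩ (T n)‖ =
        ∏ p : (k : Fin g) × Fin (m k), ‖T n p‖ ^ (b ⟨0, hg⟩ p) := by
      rw [qoMonom, norm_prod]
      exact Finset.prod_congr rfl fun p _ => norm_pow _ _
    rw [hM, hP_def]
    have hsplit : ∀ p : (k : Fin g) × Fin (m k),
        (‖C n‖ * ‖T n p‖ ^ (c p)) ^ (a p)
          = ‖C n‖ ^ (a p) * ‖T n p‖ ^ (b ⟨0, hg⟩ p) := by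
      intro p
      rw [Real.mul_rpow (le_of_lt hCpos) (by positivity)]
      congr 1
      rw [← Real.rpow_natCast_mul (norm_nonneg _)]
      have : (c p : ℝ) * a p = (b ⟨0, hg⟩ p : ℝ) := by
        have hcp : (c p : ℝ) ≠ 0 := by
          have := hc p; positivity
        field_simp [ha_def]
        simp only [ha_def]
        field_simp
      rw [this, Real.rpow_natCast]
    simp only [hsplit]
    rw [Finset.prod_mul_distrib, ← Real.rpow_sum_of_pos hCpos, ← hσ_def, ← mul_assoc,
      ← Real.rpow_add hCpos, sub_add_cancel, Real.rpow_one]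
  -- divergence
  have hdiv : Tendsto (fun n => ‖C n‖ ^ (1 - σ) * P n * ‖qoFq m b ⟨0, hg⟩ f (T n)‖)
      atTop atTop := by
    have h1 : Tendsto (fun n => ‖C n‖ ^ (1 - σ)) atTop atTop :=
      (tendsto_rpow_atTop (by linarith)).comp hC
    have h2 := h1.atTop_mul_pos hL hPlim
    exact h2.atTop_mul_pos (norm_pos_iff.mpr (hf0 ⟨0, hg⟩))
      ((continuous_norm.tendsto _).comp hF)
  have hconv : Tendsto (fun n => ‖C n * qoPhi m b f (T n)‖) atTop (𝓝 ‖v.2‖) :=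
    (continuous_norm.tendsto _).comp hsnd
  exact not_tendsto_atTop_of_tendsto_nhds hconv
    (hdiv.congr' (hkey.mono fun n h => h.symm))


lemma rpow_npow {x : ℝ} (hx : 0 ≤ x) (e : ℝ) (cn : ℕ) :
    ((x ^ e) ^ cn) = x ^ (e * cn) := by
  rw [← Real.rpow_natCast (x ^ e) cn, ← Real.rpow_mul hx]

lemma tendsto_N_atTop : Tendsto (fun n : ℕ => (n : ℝ) + 1) atTop atTop :=
  tendsto_atTop_add_const_right _ 1 tendsto_natCast_atTop_atTop

lemma tendsto_rpow_neg_exp {β : ℝ} (hβ : β < 0) :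
    Tendsto (fun n : ℕ => ((n : ℝ) + 1) ^ β) atTop (𝓝 0) := by
  have h := tendsto_rpow_neg_atTop (y := -β) (by linarith)
  have h2 := h.comp tendsto_N_atTop
  simpa [Function.comp_def] using h2

lemma norm_eq_root {u : ℝ} (hu : 0 ≤ u) {B : ℕ} (hB : 0 < B) :
    u = (u ^ B) ^ ((B : ℝ)⁻¹) := by
  rw [← Real.rpow_natCast u B, ← Real.rpow_mul hu, mul_inv_cancel₀ (by positivity),
    Real.rpow_one]

set_option maxHeartbeats 2000000 in
lemma qo_supset
    {g : ℕ} (hg : 0 < g) (m : Fin g → ℕ) (hm : ∀ k, 0 < m k)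
    (b : Fin g → ((k : Fin g) × Fin (m k)) → ℕ)
    (c : ((k : Fin g) × Fin (m k)) → ℕ) (hc : ∀ p, 0 < c p)
    (hbpos : ∀ (k : Fin g) (p : (k : Fin g) × Fin (m k)), p.1 ≤ k → 0 < b k p)
    (hbzero : ∀ (k : Fin g) (p : (k : Fin g) × Fin (m k)), k < p.1 → b k p = 0)
    (hbmono : ∀ (k k' : Fin g) (p : (k : Fin g) × Fin (m k)), k ≤ k' → b k p ≤ b k' p)
    (f : Fin g → (((k : Fin g) × Fin (m k)) → ℂ) → ℂ)
    (hf : ∀ k, AnalyticAt ℂ (f k) 0) (hf0 : ∀ k, f k 0 ≠ 0)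
    (hlt : ∑ j : Fin (m ⟨0, hg⟩), qoExp m b c ⟨0, hg⟩ ⟨⟨0, hg⟩, j⟩ < 1) {r : ℝ} (hr : 0 < r) :
    {q : (((k : Fin g) × Fin (m k)) → ℂ) × ℂ |
        ∏ j : Fin (m ⟨0, hg⟩), q.1 ⟨⟨0, hg⟩, j⟩ = 0} ⊆
      tangentConeAt ℂ (qoY m b c f r) 0 := by
  classical
  intro v hv
  simp only [Set.mem_setOf_eq] at hv
  obtain ⟨j₀, _, hx0⟩ := Finset.prod_eq_zero_iff.mp hv
  set p₀ : (k : Fin g) × Fin (m k) := ⟨⟨0, hg⟩, j₀⟩ with hp₀_def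
  have hk0le : ∀ k : Fin g, (⟨0, hg⟩ : Fin g) ≤ k := fun k => by simp [Fin.le_def]
  set B : ℕ := b ⟨0, hg⟩ p₀ with hB_def
  have hB : 0 < B := hbpos ⟨0, hg⟩ p₀ le_rfl
  -- exponents
  set a : ((k : Fin g) × Fin (m k)) → ℝ := fun p => (b ⟨0, hg⟩ p : ℝ) / (c p : ℝ) with ha_def
  have ha_nonneg : ∀ p, 0 ≤ a p := fun p => by positivity
  have ha0 : ∀ p : (k : Fin g) × Fin (m k), p.1 ≠ ⟨0, hg⟩ → a p = 0 := by
    intro p hp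
    have : (⟨0, hg⟩ : Fin g) < p.1 := lt_of_le_of_ne (hk0le p.1) (Ne.symm hp)
    simp [ha_def, hbzero _ p this]
  set σ : ℝ := ∑ p : (k : Fin g) × Fin (m k), a p with hσ_def
  have hσlt : σ < 1 := by
    have h1 : σ = ∑ k : Fin g, ∑ j : Fin (m k), a ⟨k, j⟩ := by
      rw [hσ_def, ← Finset.univ_sigma_univ, Finset.sum_sigma]
    have h2 : ∀ k : Fin g, k ≠ ⟨0, hg⟩ → ∑ j : Fin (m k), a ⟨k, j⟩ = 0 := by
      intro k hk
      exact Finset.sum_eq_zero fun j _ => ha0 ⟨k, j⟩ hk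
    have h3 : σ = ∑ j : Fin (m ⟨0, hg⟩), a ⟨⟨0, hg⟩, j⟩ := by
      rw [h1, Finset.sum_eq_single ⟨0, hg⟩ (fun k _ hk => h2 k hk) (by simp)]
    have h4 : σ = ((∑ j : Fin (m ⟨0, hg⟩), qoExp m b c ⟨0, hg⟩ ⟨⟨0, hg⟩, j⟩ : ℚ) : ℝ) := by
      rw [h3]
      push_cast [qoExp]
      rfl
    rw [h4]
    exact_mod_cast hlt
  have hap₀ : 0 < a p₀ := by
    have h1 : (0:ℝ) < (B : ℝ) := by exact_mod_cast hB
    have h2 : (0:ℝ) < (c p₀ : ℝ) := by exact_mod_cast hc p₀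
    rw [ha_def]
    exact div_pos (by exact_mod_cast hB) h2
  have hσ0 : 0 < σ := by
    refine lt_of_lt_of_le hap₀ (Finset.single_le_sum (fun p _ => ha_nonneg p) (Finset.mem_univ p₀))
  set δ : ℝ := (1 - σ) / (2 * σ) with hδ_def
  have hδ0 : 0 < δ := by
    apply div_pos (by linarith) (by linarith)
  have hδσ : δ * σ = (1 - σ) / 2 := by
    field_simp [hδ_def]
    rw [hδ_def, div_mul_eq_mul_div, div_mul_eq_mul_div, div_eq_iff (mul_ne_zero two_ne_zero hσ0.ne')]
    ring
  -- the per-coordinate exponent multiplier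
  set e : ((k : Fin g) × Fin (m k)) → ℝ := fun p => if v.1 p = 0 then 1 + δ else 1 with he_def
  have he1 : ∀ p, 1 ≤ e p := by
    intro p
    by_cases h : v.1 p = 0 <;> simp [he_def, h] <;> linarith
  have he2 : ∀ p, e p ≤ 1 + δ := by
    intro p
    by_cases h : v.1 p = 0 <;> simp [he_def, h] <;> linarith
  set E : ℝ := ∑ p ∈ Finset.univ.erase p₀, e p * a p with hE_def
  have hEa : E + a p₀ < 1 := by
    have h2 : ∑ p ∈ Finset.univ.erase p₀, a p = σ - a p₀ := by
      have h := Finset.sum_erase_add Finset.univ a (Finset.mem_univ p₀)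
      rw [hσ_def]
      linarith [h]
    have h1 : E ≤ (1 + δ) * (σ - a p₀) := by
      rw [hE_def, ← h2, Finset.mul_sum]
      exact Finset.sum_le_sum fun p _ =>
        mul_le_mul_of_nonneg_right (he2 p) (ha_nonneg p)
    have h3 : 0 < δ * a p₀ := mul_pos hδ0 hap₀
    nlinarith [hδσ]
  have hE1 : E < 1 := by linarith
  have hE0 : 0 ≤ E := Finset.sum_nonneg fun p _ =>
    mul_nonneg (by linarith [he1 p]) (ha_nonneg p)
  -- roots of the target coordinates
  have hroot : ∀ p : (k : Fin g) × Fin (m k), ∃ uu : ℂ, uu ^ c p = v.1 p :=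
    fun p => IsAlgClosed.exists_pow_nat_eq (v.1 p) (hc p)
  choose u hu using hroot
  set N : ℕ → ℝ := fun n => (n : ℝ) + 1 with hN_def
  have hNpos : ∀ n, (0:ℝ) < N n := fun n => by positivity
  have hcR : ∀ p, ((c p : ℝ)) ≠ 0 := fun p => by
    have := hc p; positivity
  -- coordinates away from p₀
  set S : ℕ → ((k : Fin g) × Fin (m k)) → ℂ := fun n p =>
    if v.1 p = 0 then ((N n ^ (-(1 + δ) / c p) : ℝ) : ℂ)
    else u p * ((N n ^ ((-1 : ℝ) / c p) : ℝ) : ℂ) with hS_def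
  set κ : ((k : Fin g) × Fin (m k)) → ℝ := fun p => if v.1 p = 0 then 1 else ‖u p‖ with hκ_def
  have hκpos : ∀ p, 0 < κ p := by
    intro p
    rw [hκ_def]
    by_cases h : v.1 p = 0
    · simp [h]
    · have hup : u p ≠ 0 := by
        intro h0
        exact h (by rw [← hu p, h0, zero_pow (hc p).ne'])
      simp only [h, if_false]
      exact norm_pos_iff.mpr hup
  have hSnorm : ∀ n p, ‖S n p‖ = κ p * N n ^ (-(e p) / c p) := by
    intro n p
    rw [hS_def, hκ_def, he_def]
    by_cases h : v.1 p = 0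
    · simp only [h, if_true]
      rw [Complex.norm_real, Real.norm_eq_abs,
        abs_of_pos (Real.rpow_pos_of_pos (hNpos n) _), one_mul]
    · simp only [h, if_false]
      rw [norm_mul, Complex.norm_real, Real.norm_eq_abs,
        abs_of_pos (Real.rpow_pos_of_pos (hNpos n) _)]
  have hSne : ∀ n p, S n p ≠ 0 := by
    intro n p h0
    have h1 := hSnorm n p
    rw [h0, norm_zero] at h1
    have h2 : 0 < κ p * N n ^ (-(e p) / c p) :=
      mul_pos (hκpos p) (Real.rpow_pos_of_pos (hNpos n) _)
    rw [← h1] at h2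
    exact lt_irrefl _ h2
  -- the partial monomial
  set A : ℕ → ℂ := fun n => ∏ p ∈ Finset.univ.erase p₀, S n p ^ b ⟨0, hg⟩ p with hA_def
  have hAne : ∀ n, A n ≠ 0 := fun n =>
    Finset.prod_ne_zero_iff.mpr fun p _ => pow_ne_zero _ (hSne n p)
  set K : ℝ := ∏ p ∈ Finset.univ.erase p₀, κ p ^ b ⟨0, hg⟩ p with hK_def
  have hKpos : 0 < K := Finset.prod_pos fun p _ => pow_pos (hκpos p) _
  have hAnorm : ∀ n, ‖A n‖ = K * N n ^ (-E) := by
    intro n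
    have h1 : ‖A n‖ = ∏ p ∈ Finset.univ.erase p₀, ‖S n p‖ ^ b ⟨0, hg⟩ p := by
      rw [hA_def, norm_prod]
      exact Finset.prod_congr rfl fun p _ => norm_pow _ _
    have h2 : ∀ p ∈ Finset.univ.erase p₀,
        ‖S n p‖ ^ b ⟨0, hg⟩ p = κ p ^ b ⟨0, hg⟩ p * N n ^ (-(e p * a p)) := by
      intro p _
      rw [hSnorm n p, mul_pow, rpow_npow (le_of_lt (hNpos n))]
      congr 2
      rw [ha_def]
      field_simp
    rw [h1, Finset.prod_congr rfl h2, Finset.prod_mul_distrib,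
      ← Real.rpow_sum_of_pos (hNpos n), hK_def, hE_def, ← Finset.sum_neg_distrib]
  -- the tuned coordinate
  have hwex : ∀ n, ∃ ww : ℂ, ww ^ B = v.2 / (((N n : ℝ) : ℂ) * f ⟨0, hg⟩ 0 * A n) :=
    fun n => IsAlgClosed.exists_pow_nat_eq _ hB
  choose w hw using hwex
  set T : ℕ → ((k : Fin g) × Fin (m k)) → ℂ :=
    fun n p => if p = p₀ then w n else S n p with hT_def
  set F0 : ℝ := ‖f ⟨0, hg⟩ 0‖ with hF0_def
  have hF0pos : 0 < F0 := norm_pos_iff.mpr (hf0 _)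
  set Q : ℝ := ‖v.2‖ / (F0 * K) with hQ_def
  have hQ0 : 0 ≤ Q := div_nonneg (norm_nonneg _) (le_of_lt (mul_pos hF0pos hKpos))
  have hwB : ∀ n, ‖w n‖ ^ B = Q * N n ^ (E - 1) := by
    intro n
    have h1 := congrArg norm (hw n)
    rw [norm_pow, norm_div, norm_mul, norm_mul, Complex.norm_real, Real.norm_eq_abs,
      abs_of_pos (hNpos n), hAnorm n] at h1
    rw [h1, hQ_def]
    have hNE : N n * F0 * (K * N n ^ (-E)) = F0 * K * N n ^ (1 - E) := by
      rw [show (1 : ℝ) - E = 1 + -E by ring, Real.rpow_add (hNpos n), Real.rpow_one]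
      ring
    rw [hNE, show E - 1 = -(1 - E) by ring, Real.rpow_neg (le_of_lt (hNpos n))]
    rw [div_eq_mul_inv, mul_inv, mul_inv]
    ring
  set R : ℝ := Q ^ ((B : ℝ)⁻¹) with hR_def
  have hR0 : 0 ≤ R := Real.rpow_nonneg hQ0 _
  set β : ℝ := (E - 1) * (B : ℝ)⁻¹ with hβ_def
  have hβ : β < 0 :=
    mul_neg_of_neg_of_pos (by linarith) (by positivity)
  have hwnorm : ∀ n, ‖w n‖ = R * N n ^ β := by
    intro n
    rw [norm_eq_root (norm_nonneg (w n)) hB, hwB n,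
      Real.mul_rpow hQ0 (Real.rpow_nonneg (le_of_lt (hNpos n)) _),
      ← Real.rpow_mul (le_of_lt (hNpos n)), hR_def, hβ_def]
  set γ : ℝ := 1 + β * (c p₀ : ℝ) with hγ_def
  have hγ : γ < 0 := by
    have h5 : (B : ℝ)⁻¹ * (c p₀ : ℝ) * a p₀ = 1 := by
      have hBne : ((B : ℝ)) ≠ 0 := Nat.cast_ne_zero.mpr hB.ne'
      rw [ha_def]
      simp only [← hB_def]
      field_simp
      exact div_self (hcR p₀)
    have h6 : (0:ℝ) < (B : ℝ)⁻¹ * (c p₀ : ℝ) :=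
      mul_pos (inv_pos.mpr (by exact_mod_cast hB)) (by exact_mod_cast hc p₀)
    have h7 := mul_lt_mul_of_pos_right (show E - 1 < -a p₀ by linarith) h6
    rw [hγ_def, hβ_def]
    nlinarith [h5, h7]
  -- per-coordinate norm limits
  have hTco : ∀ p, Tendsto (fun n => ‖T n p‖) atTop (𝓝 0) := by
    intro p
    by_cases hp : p = p₀
    · subst hp
      have h1 : (fun n => ‖T n p₀‖) = fun n => R * N n ^ β := by
        funext n
        rw [hT_def]
        simp only [if_pos rfl]
        exact hwnorm n
      rw [h1]
      have := (tendsto_rpow_neg_exp hβ).const_mul R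
      simpa [hN_def] using this
    · have h1 : (fun n => ‖T n p‖) = fun n => κ p * N n ^ (-(e p) / c p) := by
        funext n
        rw [hT_def]
        simp only [if_neg hp]
        exact hSnorm n p
      rw [h1]
      have hexp : -(e p) / (c p : ℝ) < 0 := by
        apply div_neg_of_neg_of_pos
        · linarith [he1 p]
        · exact_mod_cast hc p
      have := (tendsto_rpow_neg_exp hexp).const_mul (κ p)
      simpa [hN_def] using this
  have hT0 : Tendsto T atTop (𝓝 0) := by
    rw [tendsto_pi_nhds]
    intro p
    simp only [Pi.zero_apply]
    exact tendsto_zero_iff_norm_tendsto_zero.mpr (hTco p)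
  have hFlim : Tendsto (fun n => qoFq m b ⟨0, hg⟩ f (T n)) atTop (𝓝 (f ⟨0, hg⟩ 0)) := by
    have := (qoFq_contAt m b ⟨0, hg⟩ f hf).tendsto.comp hT0
    rwa [qoFq_zero hg m hm b hbpos hbzero f] at this
  -- second-component identity
  have hMsplit : ∀ n, qoMonom m b ⟨0, hg⟩ (T n) = w n ^ B * A n := by
    intro n
    rw [qoMonom, ← Finset.mul_prod_erase Finset.univ _ (Finset.mem_univ p₀), hT_def]
    simp only [if_pos rfl]
    rw [hB_def, hA_def]
    congr 1
    exact Finset.prod_congr rfl fun p hp => by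
      rw [if_neg (Finset.ne_of_mem_erase hp)]
  have hNneC : ∀ n, ((N n : ℝ) : ℂ) ≠ 0 := fun n => by
    simp only [ne_eq, Complex.ofReal_eq_zero]
    exact (hNpos n).ne'
  have hsnd : Tendsto (fun n => ((N n : ℝ) : ℂ) * qoPhi m b f (T n)) atTop (𝓝 v.2) := by
    have hid : ∀ n, ((N n : ℝ) : ℂ) * qoPhi m b f (T n)
        = v.2 * qoFq m b ⟨0, hg⟩ f (T n) / f ⟨0, hg⟩ 0 := by
      intro n
      rw [qoPhi_factor m b ⟨0, hg⟩ f (fun k p => hbmono ⟨0, hg⟩ k p (hk0le k)) (T n),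
        hMsplit n, hw n]
      field_simp [hAne n, hf0 ⟨0, hg⟩, hNneC n]
    have h2 : Tendsto (fun n => v.2 * qoFq m b ⟨0, hg⟩ f (T n) / f ⟨0, hg⟩ 0) atTop
        (𝓝 (v.2 * f ⟨0, hg⟩ 0 / f ⟨0, hg⟩ 0)) :=
      (hFlim.const_mul v.2).div_const _
    rw [mul_div_assoc, div_self (hf0 ⟨0, hg⟩), mul_one] at h2
    exact h2.congr fun n => (hid n).symm
  -- first-component limits
  have hfst : ∀ p, Tendsto (fun n => ((N n : ℝ) : ℂ) * T n p ^ c p) atTop (𝓝 (v.1 p)) := by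
    intro p
    by_cases hp : p = p₀
    · subst hp
      have hval : v.1 p₀ = 0 := hx0
      rw [hval, tendsto_zero_iff_norm_tendsto_zero]
      have hnorm : ∀ n, ‖((N n : ℝ) : ℂ) * T n p₀ ^ c p₀‖ = R ^ c p₀ * N n ^ γ := by
        intro n
        rw [norm_mul, norm_pow, Complex.norm_real, Real.norm_eq_abs, abs_of_pos (hNpos n)]
        have h1 : ‖T n p₀‖ = R * N n ^ β := by
          rw [hT_def]; simp only [if_pos rfl]; exact hwnorm n
        rw [h1, mul_pow, rpow_npow (le_of_lt (hNpos n)), hγ_def,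
          Real.rpow_add (hNpos n), Real.rpow_one]
        ring
      have := (tendsto_rpow_neg_exp hγ).const_mul (R ^ c p₀)
      simp only [mul_zero] at this
      refine Tendsto.congr (fun n => (hnorm n).symm) ?_
      simpa [hN_def] using this
    · by_cases hvp : v.1 p = 0
      · rw [hvp]
        have hid : ∀ n, ((N n : ℝ) : ℂ) * T n p ^ c p = ((N n ^ (-δ) : ℝ) : ℂ) := by
          intro n
          rw [hT_def]
          simp only [if_neg hp, hS_def, if_pos hvp]
          rw [← Complex.ofReal_pow, rpow_npow (le_of_lt (hNpos n)), ← Complex.ofReal_mul]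
          congr 1
          rw [div_mul_cancel₀ _ (hcR p)]
          rw [show -δ = 1 + -(1 + δ) by ring, Real.rpow_add (hNpos n), Real.rpow_one]
        have h2 := (Complex.continuous_ofReal.tendsto 0).comp (tendsto_rpow_neg_exp
          (show -δ < 0 by linarith))
        simp only [Complex.ofReal_zero] at h2
        refine Tendsto.congr (fun n => (hid n).symm) ?_
        simpa [hN_def, Function.comp_def] using h2
      · have hid : ∀ n, ((N n : ℝ) : ℂ) * T n p ^ c p = v.1 p := by
          intro n
          rw [hT_def]
          simp only [if_neg hp, hS_def, if_neg hvp]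
          rw [mul_pow, ← Complex.ofReal_pow, rpow_npow (le_of_lt (hNpos n)),
            div_mul_cancel₀ _ (hcR p), Real.rpow_neg_one, hu p]
          rw [← mul_assoc, mul_comm (((N n : ℝ) : ℂ)), mul_assoc, ← Complex.ofReal_mul,
            mul_inv_cancel₀ (hNpos n).ne', Complex.ofReal_one, mul_one]
        exact tendsto_const_nhds.congr fun n => (hid n).symm
  -- assemble
  refine mem_tangentConeAt_iff_exists_seq_norm_tendsto_atTop.mpr ⟨fun n => ((N n : ℝ) : ℂ),
    fun n => (fun p => T n p ^ c p, qoPhi m b f (T n)), ?_, ?_, ?_⟩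
  swap
  · have hsmall : ∀ p, ∀ᶠ n in atTop, ‖T n p‖ < r := by
      intro p
      have := (hTco p).eventually_lt_const hr
      simpa using this
    filter_upwards [eventually_all.mpr hsmall] with n hn
    rw [zero_add]
    exact ⟨T n, hn, rfl⟩
  · have h1 : (fun n => ‖((N n : ℝ) : ℂ)‖) = N := by
      funext n
      rw [Complex.norm_real, Real.norm_eq_abs, abs_of_pos (hNpos n)]
    rw [h1]
    exact tendsto_N_atTop
  · have h2 := Tendsto.prodMk_nhds (tendsto_pi_nhds.mpr hfst) hsnd
    refine Tendsto.congr (fun n => ?_) (by simpa using h2)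
    ext q
    · simp [smul_eq_mul]
    · simp [smul_eq_mul]



theorem qo_tangent_cone_of_sum_lt_one
    {g : ℕ} (hg : 0 < g) (m : Fin g → ℕ) (hm : ∀ k, 0 < m k)
    (b : Fin g → ((k : Fin g) × Fin (m k)) → ℕ)
    (c : ((k : Fin g) × Fin (m k)) → ℕ) (hc : ∀ p, 0 < c p)
    (hbpos : ∀ (k : Fin g) (p : (k : Fin g) × Fin (m k)), p.1 ≤ k → 0 < b k p)
    (hbzero : ∀ (k : Fin g) (p : (k : Fin g) × Fin (m k)), k < p.1 → b k p = 0)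
    (hbmono : ∀ (k k' : Fin g) (p : (k : Fin g) × Fin (m k)), k ≤ k' → b k p ≤ b k' p)
    (f : Fin g → (((k : Fin g) × Fin (m k)) → ℂ) → ℂ)
    (hf : ∀ k, AnalyticAt ℂ (f k) 0) (hf0 : ∀ k, f k 0 ≠ 0)
    (hlt : ∑ j : Fin (m ⟨0, hg⟩), qoExp m b c ⟨0, hg⟩ ⟨⟨0, hg⟩, j⟩ < 1) :
    ∃ r₀ > (0 : ℝ), ∀ r : ℝ, 0 < r → r ≤ r₀ →
      tangentConeAt ℂ (qoY m b c f r) 0 =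
        {q : (((k : Fin g) × Fin (m k)) → ℂ) × ℂ |
          ∏ j : Fin (m ⟨0, hg⟩), q.1 ⟨⟨0, hg⟩, j⟩ = 0} := by
  refine ⟨1, one_pos, fun r hr _ => ?_⟩
  exact Set.Subset.antisymm
    (qo_subset hg m hm b c hc hbpos hbzero hbmono f hf hf0 hlt r)
    (qo_supset hg m hm b c hc hbpos hbzero hbmono f hf hf0 hlt hr)

end
end

section
/- In the quasi-ordinary setup below, assume ∑_{i=1}^{m_1} a_{11i} > 1. Then there exists r_0 > 0 such that for all 0 < r ≤ r_0 the tangent cone of Y_r at 0 equals the hyperplane {(x, y) ∈ ℂ^n × ℂ : y = 0}. -/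
open Filter Topology

noncomputable section

theorem qo_tangent_cone_of_sum_gt_one
    {g : ℕ} (hg : 0 < g) (m : Fin g → ℕ) (hm : ∀ k, 0 < m k)
    (b : Fin g → ((k : Fin g) × Fin (m k)) → ℕ)
    (c : ((k : Fin g) × Fin (m k)) → ℕ) (hc : ∀ p, 0 < c p)
    (hbpos : ∀ (k : Fin g) (p : (k : Fin g) × Fin (m k)), p.1 ≤ k → 0 < b k p)
    (hbzero : ∀ (k : Fin g) (p : (k : Fin g) × Fin (m k)), k < p.1 → b k p = 0)
    (hbmono : ∀ (k k' : Fin g) (p : (k : Fin g) × Fin (m k)), k ≤ k' → b k p ≤ b k' p)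
    (f : Fin g → (((k : Fin g) × Fin (m k)) → ℂ) → ℂ)
    (hf : ∀ k, AnalyticAt ℂ (f k) 0) (hf0 : ∀ k, f k 0 ≠ 0)
    (hgt : 1 < ∑ j : Fin (m ⟨0, hg⟩), qoExp m b c ⟨0, hg⟩ ⟨⟨0, hg⟩, j⟩) :
    ∃ r₀ > (0 : ℝ), ∀ r : ℝ, 0 < r → r ≤ r₀ →
      tangentConeAt ℂ (qoY m b c f r) 0 =
        {q : (((k : Fin g) × Fin (m k)) → ℂ) × ℂ | q.2 = 0} := by
  classical
  haveI : Nonempty (Fin g) := ⟨⟨0, hg⟩⟩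
  set k0 : Fin g := ⟨0, hg⟩ with hk0
  set A : ℝ := ∑ p : ((k : Fin g) × Fin (m k)), (b k0 p : ℝ) / (c p : ℝ) with hA
  -- A > 1
  have hA1 : 1 < A := by
    have h1 : A = ∑ k : Fin g, ∑ j : Fin (m k), (b k0 ⟨k, j⟩ : ℝ) / (c ⟨k, j⟩ : ℝ) := by
      rw [hA, ← Finset.univ_sigma_univ, Finset.sum_sigma]
    have h2 : ∀ k : Fin g, k ≠ k0 →
        (∑ j : Fin (m k), (b k0 ⟨k, j⟩ : ℝ) / (c ⟨k, j⟩ : ℝ)) = 0 := by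
      intro k hk
      apply Finset.sum_eq_zero
      intro j _
      have hk' : k0 < k := by
        rw [Fin.lt_def]
        exact Nat.pos_of_ne_zero (fun h => hk (Fin.ext h))
      rw [hbzero k0 ⟨k, j⟩ hk']
      simp
    rw [h1, Fintype.sum_eq_single k0 h2]
    have hcast : ((∑ j : Fin (m k0), qoExp m b c k0 ⟨k0, j⟩ : ℚ) : ℝ) =
        ∑ j : Fin (m k0), (b k0 ⟨k0, j⟩ : ℝ) / (c ⟨k0, j⟩ : ℝ) := by
      push_cast [qoExp]
      rfl
    have := hgt
    rw [show (1 : ℚ) < _ ↔ ((1:ℚ):ℝ) < ((∑ j : Fin (m k0), qoExp m b c k0 ⟨k0, j⟩ : ℚ) : ℝ)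
      from (Rat.cast_lt (K := ℝ)).symm] at this
    rwa [hcast, Rat.cast_one] at this
  have hA0 : (0:ℝ) < A := lt_trans one_pos hA1
  -- monomial bound
  have hMbound : ∀ t : ((k : Fin g) × Fin (m k)) → ℂ, (∀ p, ‖t p‖ ≤ 1) → ∀ k,
      ‖qoMonom m b k t‖ ≤ ∏ p : ((k : Fin g) × Fin (m k)), ‖t p‖ ^ b k0 p := by
    intro t ht k
    rw [qoMonom, norm_prod]
    apply Finset.prod_le_prod
    · intro p _; positivity
    · intro p _
      rw [norm_pow]
      exact pow_le_pow_of_le_one (norm_nonneg _) (ht p)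
        (hbmono k0 k p (by rw [Fin.le_def]; exact Nat.zero_le _))
  -- bound on f near 0
  have hfb : ∀ k : Fin g, ∃ ε > (0:ℝ), ∀ t : ((k : Fin g) × Fin (m k)) → ℂ, ‖t‖ < ε →
      ‖f k t‖ ≤ ‖f k 0‖ + 1 := by
    intro k
    have h := (hf k).continuousAt
    rw [Metric.continuousAt_iff] at h
    obtain ⟨δ, hδ, h⟩ := h 1 one_pos
    refine ⟨δ, hδ, fun t ht => ?_⟩
    have h2 : dist (f k t) (f k 0) < 1 := h (by simpa [dist_zero_right] using ht)
    rw [Complex.dist_eq] at h2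
    calc ‖f k t‖ = ‖f k t - f k 0 + f k 0‖ := by ring_nf
      _ ≤ ‖f k t - f k 0‖ + ‖f k 0‖ := norm_add_le _ _
      _ ≤ ‖f k 0‖ + 1 := by linarith
  choose εf hεf hfbd using hfb
  set ε : ℝ := min 1 (Finset.univ.inf' Finset.univ_nonempty εf) with hεdef
  have hε0 : 0 < ε := lt_min one_pos (by rw [Finset.lt_inf'_iff]; exact fun k _ => hεf k)
  have hε1 : ε ≤ 1 := min_le_left _ _
  have hεle : ∀ k, ε ≤ εf k := fun k =>
    le_trans (min_le_right _ _) (Finset.inf'_le _ (Finset.mem_univ k))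
  set C : ℝ := ∑ k : Fin g, (‖f k 0‖ + 1) with hCdef
  have hC1 : 1 ≤ C := by
    have h1 : (1:ℝ) ≤ (g:ℝ) := by exact_mod_cast hg
    have h2 : (g:ℝ) = ∑ _k : Fin g, (1:ℝ) := by simp
    have h3 : (∑ _k : Fin g, (1:ℝ)) ≤ C :=
      Finset.sum_le_sum fun k _ => by linarith [norm_nonneg (f k 0)]
    linarith
  have hC0 : (0:ℝ) ≤ C := by linarith
  -- φ bound
  have hφ : ∀ t : ((k : Fin g) × Fin (m k)) → ℂ, ‖t‖ < ε →
      ‖qoPhi m b f t‖ ≤ C * ∏ p : ((k : Fin g) × Fin (m k)), ‖t p‖ ^ b k0 p := by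
    intro t ht
    have htp : ∀ p : ((k : Fin g) × Fin (m k)), ‖t p‖ ≤ 1 := by
      intro p
      have := norm_le_pi_norm t p
      linarith [lt_of_lt_of_le ht hε1]
    have hP0 : (0:ℝ) ≤ ∏ p : ((k : Fin g) × Fin (m k)), ‖t p‖ ^ b k0 p := by positivity
    rw [qoPhi]
    calc ‖∑ k : Fin g, qoMonom m b k t * f k t‖
        ≤ ∑ k : Fin g, ‖qoMonom m b k t * f k t‖ :=
          norm_sum_le _ _
      _ ≤ ∑ k : Fin g, (∏ p : ((k : Fin g) × Fin (m k)), ‖t p‖ ^ b k0 p) * (‖f k 0‖ + 1) := by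
          apply Finset.sum_le_sum
          intro k _
          rw [norm_mul]
          exact mul_le_mul (hMbound t htp k) (hfbd k t (lt_of_lt_of_le ht (hεle k)))
            (norm_nonneg _) hP0
      _ = C * ∏ p : ((k : Fin g) × Fin (m k)), ‖t p‖ ^ b k0 p := by
          rw [← Finset.mul_sum, hCdef, mul_comm]
  -- core product estimate
  have hest : ∀ (S K : ℝ), 1 ≤ S → 0 ≤ K → ∀ t : ((k : Fin g) × Fin (m k)) → ℂ,
      (∀ p : ((k : Fin g) × Fin (m k)), ‖t p‖ ^ (c p) ≤ K / S) →
      (∏ p : ((k : Fin g) × Fin (m k)), ‖t p‖ ^ b k0 p) ≤ (K / S) ^ A := by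
    intro S K hS hK t ht
    have hS0 : (0:ℝ) < S := lt_of_lt_of_le one_pos hS
    have hKS : (0:ℝ) ≤ K / S := div_nonneg hK hS0.le
    have h1 : ∀ p : ((k : Fin g) × Fin (m k)), ‖t p‖ ≤ (K / S) ^ ((c p : ℝ)⁻¹) := by
      intro p
      have h2 : (‖t p‖ ^ (c p) : ℝ) ^ ((c p : ℝ)⁻¹) ≤ (K / S) ^ ((c p : ℝ)⁻¹) :=
        Real.rpow_le_rpow (by positivity) (ht p) (by positivity)
      rwa [Real.pow_rpow_inv_natCast (norm_nonneg _) (hc p).ne'] at h2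
    calc (∏ p : ((k : Fin g) × Fin (m k)), ‖t p‖ ^ b k0 p)
        ≤ ∏ p : ((k : Fin g) × Fin (m k)), ((K / S) ^ ((c p : ℝ)⁻¹)) ^ (b k0 p) :=
          Finset.prod_le_prod (fun p _ => by positivity)
            (fun p _ => pow_le_pow_left₀ (norm_nonneg _) (h1 p) _)
      _ = ∏ p : ((k : Fin g) × Fin (m k)), (K / S) ^ ((b k0 p : ℝ) / (c p : ℝ)) := by
          refine Finset.prod_congr rfl fun p _ => ?_
          rw [← Real.rpow_natCast ((K / S) ^ ((c p : ℝ)⁻¹)) (b k0 p), ← Real.rpow_mul hKS]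
          congr 1
          field_simp
      _ = (K / S) ^ A := by
          rw [hA, Real.rpow_sum_of_nonneg hKS]
          intro p _
          positivity
  -- main estimate
  have hmain : ∀ (S K : ℝ), 1 ≤ S → 1 ≤ K → ∀ t : ((k : Fin g) × Fin (m k)) → ℂ, ‖t‖ < ε →
      (∀ p : ((k : Fin g) × Fin (m k)), ‖t p‖ ^ (c p) ≤ K / S) →
      S * ‖qoPhi m b f t‖ ≤ C * K ^ A * S ^ (1 - A) := by
    intro S K hS hK t htε htp
    have hS0 : (0:ℝ) < S := lt_of_lt_of_le one_pos hS
    have hK0 : (0:ℝ) ≤ K := by linarith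
    have h1 := hφ t htε
    have h2 := hest S K hS hK0 t htp
    have h3 : ‖qoPhi m b f t‖ ≤ C * (K / S) ^ A :=
      h1.trans (mul_le_mul_of_nonneg_left h2 hC0)
    calc S * ‖qoPhi m b f t‖ ≤ S * (C * (K / S) ^ A) :=
          mul_le_mul_of_nonneg_left h3 hS0.le
      _ = C * K ^ A * S ^ (1 - A) := by
          rw [Real.div_rpow hK0 hS0.le, Real.rpow_sub hS0, Real.rpow_one]
          ring
  -- tendsto of the bound
  have htendbound : ∀ (K : ℝ) (S : ℕ → ℝ), Tendsto S atTop atTop →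
      Tendsto (fun n => C * K ^ A * S n ^ (1 - A)) atTop (𝓝 0) := by
    intro K S hS
    have h1 : Tendsto (fun n => S n ^ (-(A - 1))) atTop (𝓝 0) :=
      (tendsto_rpow_neg_atTop (by linarith)).comp hS
    have h2 := h1.const_mul (C * K ^ A)
    rw [mul_zero] at h2
    convert h2 using 2 with n
    · ring_nf
  -- max of c
  set cmax : ℕ := Finset.univ.sup c with hcmax
  have hcle : ∀ p : ((k : Fin g) × Fin (m k)), ε ^ (c p) ≥ ε ^ cmax := fun p =>
    pow_le_pow_of_le_one hε0.le hε1 (Finset.le_sup (Finset.mem_univ p))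
  have hεc0 : (0:ℝ) < ε ^ cmax := pow_pos hε0 _
  refine ⟨1, one_pos, fun r hr _ => ?_⟩
  apply Set.Subset.antisymm
  · -- tangent cone ⊆ hyperplane
    rintro v hv
    obtain ⟨sq, d, hsq, hdmem, hlim⟩ := mem_tangentConeAt_iff_exists_seq_norm_tendsto_atTop.mp hv
    show v.2 = 0
    have hsnd : Tendsto (fun n => (sq n • d n).2) atTop (𝓝 v.2) :=
      (continuous_snd.tendsto v).comp hlim
    set K : ℝ := ‖v‖ + 1 with hKdef
    have hK1 : (1:ℝ) ≤ K := by have := norm_nonneg v; linarith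
    have hKbd : ∀ᶠ n in atTop, ‖sq n • d n‖ ≤ K := by
      have h1 : Tendsto (fun n => ‖sq n • d n‖) atTop (𝓝 ‖v‖) := hlim.norm
      exact h1.eventually (eventually_le_nhds (by linarith : ‖v‖ < K))
    have hS1 : ∀ᶠ n in atTop, 1 ≤ ‖sq n‖ := hsq.eventually_ge_atTop 1
    have hSε : ∀ᶠ n in atTop, K / ‖sq n‖ < ε ^ cmax := by
      filter_upwards [hsq.eventually_gt_atTop (K / ε ^ cmax), hsq.eventually_ge_atTop 1]
        with n h1 h2
      rw [div_lt_iff₀ (by linarith : (0:ℝ) < ‖sq n‖)]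
      rw [div_lt_iff₀ hεc0] at h1
      linarith [mul_comm (ε ^ cmax) ‖sq n‖]
    have hbound : ∀ᶠ n in atTop,
        ‖(sq n • d n).2‖ ≤ C * K ^ A * ‖sq n‖ ^ (1 - A) := by
      filter_upwards [hdmem, hKbd, hS1, hSε] with n hmem hKn h1n hεn
      rw [zero_add] at hmem
      obtain ⟨t, htr, hteq⟩ := hmem
      have hS0 : (0:ℝ) < ‖sq n‖ := by linarith
      have htc : ∀ p : ((k : Fin g) × Fin (m k)), ‖t p‖ ^ (c p) ≤ K / ‖sq n‖ := by
        intro p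
        have h2 : ‖sq n‖ * ‖t p‖ ^ (c p) = ‖(sq n • d n).1 p‖ := by
          rw [← hteq]
          simp only [Prod.smul_fst, Pi.smul_apply, smul_eq_mul, norm_mul,
            norm_pow]
        have h3 : ‖(sq n • d n).1 p‖ ≤ ‖sq n • d n‖ :=
          le_trans (norm_le_pi_norm _ p) (norm_fst_le _)
        rw [le_div_iff₀ hS0, mul_comm, h2]
        exact le_trans h3 hKn
      have htε : ∀ p : ((k : Fin g) × Fin (m k)), ‖t p‖ < ε := by
        intro p
        by_contra hcon
        push_neg at hcon
        have h4 : ε ^ (c p) ≤ ‖t p‖ ^ (c p) :=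
          pow_le_pow_left₀ hε0.le hcon _
        have h5 := le_trans (hcle p) (h4.trans (htc p))
        linarith
      have htnorm : ‖t‖ < ε := by
        rw [pi_norm_lt_iff hε0]
        intro p
        exact htε p
      have h6 := hmain ‖sq n‖ K h1n hK1 t htnorm htc
      have h7 : ‖(sq n • d n).2‖ = ‖sq n‖ * ‖qoPhi m b f t‖ := by
        rw [← hteq]
        simp only [Prod.smul_snd, smul_eq_mul, norm_mul]
      rw [h7]
      exact h6
    have hzero : Tendsto (fun n => (sq n • d n).2) atTop (𝓝 0) :=
      squeeze_zero_norm' hbound (htendbound K _ hsq)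
    exact tendsto_nhds_unique hsnd hzero
  · -- hyperplane ⊆ tangent cone
    rintro ⟨w, y⟩ hy
    simp only [Set.mem_setOf_eq] at hy
    subst hy
    set t : ℕ → ((k : Fin g) × Fin (m k)) → ℂ := fun n p => (w p / ((n : ℂ) + 1)) ^ ((c p : ℂ)⁻¹) with htdef
    have hnc : ∀ n : ℕ, ((n : ℂ) + 1) ≠ 0 := by
      intro n
      have : ((n : ℂ) + 1) = ((n + 1 : ℕ) : ℂ) := by push_cast; ring
      rw [this]
      exact_mod_cast Nat.succ_ne_zero n
    have hpow : ∀ n p, (t n p) ^ (c p) = w p / ((n : ℂ) + 1) := by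
      intro n p
      exact Complex.cpow_nat_inv_pow _ (hc p).ne'
    have habsnc : ∀ n : ℕ, ‖(n : ℂ) + 1‖ = (n : ℝ) + 1 := by
      intro n
      have h : ((n : ℂ) + 1) = ((n + 1 : ℕ) : ℂ) := by push_cast; ring
      rw [h, Complex.norm_natCast]
      push_cast; ring
    have habspow : ∀ n p, ‖t n p‖ ^ (c p) = ‖w p‖ / ((n : ℝ) + 1) := by
      intro n p
      rw [← norm_pow, hpow, norm_div, habsnc]
    have hn1pos : ∀ n : ℕ, (0:ℝ) < (n : ℝ) + 1 := fun n => by positivity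
    have hdivtend : ∀ p : ((k : Fin g) × Fin (m k)), Tendsto (fun n : ℕ => ‖w p‖ / ((n : ℝ) + 1))
        atTop (𝓝 0) := by
      intro p
      have h1 : Tendsto (fun n : ℕ => ((n : ℝ) + 1)) atTop atTop :=
        tendsto_atTop_add_const_right _ _ tendsto_natCast_atTop_atTop
      exact tendsto_const_nhds.div_atTop h1
    have hsmall : ∀ δ : ℝ, 0 < δ → ∀ᶠ n in atTop, ∀ p : ((k : Fin g) × Fin (m k)), ‖t n p‖ < δ := by
      intro δ hδ
      rw [eventually_all]
      intro p
      have h2 := (hdivtend p).eventually (eventually_lt_nhds (pow_pos hδ (c p)))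
      filter_upwards [h2] with n hn
      have h3 : ‖t n p‖ ^ (c p) < δ ^ (c p) := by
        rw [habspow n p]; exact hn
      exact lt_of_pow_lt_pow_left₀ _ hδ.le h3
    refine mem_tangentConeAt_iff_exists_seq_norm_tendsto_atTop.mpr ⟨fun n => (n : ℂ) + 1,
      fun n => (fun p => w p / ((n : ℂ) + 1), qoPhi m b f (t n)), ?_, ?_, ?_⟩
    swap
    · -- membership
      filter_upwards [hsmall r hr] with n hn
      rw [zero_add]
      exact ⟨t n, hn, by
        refine Prod.ext ?_ rfl
        funext p
        exact hpow n p⟩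
    · -- norms to infinity
      have h1 : (fun n : ℕ => ‖(n : ℂ) + 1‖) = fun n : ℕ => (n : ℝ) + 1 := by
        funext n
        rw [habsnc]
      rw [h1]
      exact tendsto_atTop_add_const_right _ _ tendsto_natCast_atTop_atTop
    · -- limit
      have hdeq : ∀ n : ℕ, ((n : ℂ) + 1) •
          ((fun p => w p / ((n : ℂ) + 1), qoPhi m b f (t n)) : (((k : Fin g) × Fin (m k)) → ℂ) × ℂ) =
          (w, ((n : ℂ) + 1) * qoPhi m b f (t n)) := by
        intro n
        refine Prod.ext ?_ rfl
        funext p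
        simp only [Prod.smul_fst, Pi.smul_apply, smul_eq_mul]
        exact mul_div_cancel₀ _ (hnc n)
      simp only [hdeq]
      have h2nd : Tendsto (fun n : ℕ => ((n : ℂ) + 1) * qoPhi m b f (t n)) atTop (𝓝 0) := by
        set K : ℝ := ‖w‖ + 1 with hKdef
        have hK1 : (1:ℝ) ≤ K := by have := norm_nonneg w; linarith
        apply squeeze_zero_norm'
          (a := fun n : ℕ => C * K ^ A * ((n : ℝ) + 1) ^ (1 - A))
        · filter_upwards [hsmall ε hε0] with n hn
          have htnorm : ‖t n‖ < ε := by
            rw [pi_norm_lt_iff hε0]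
            intro p
            exact hn p
          have hS1 : (1:ℝ) ≤ (n : ℝ) + 1 := by
            have : (0:ℝ) ≤ (n : ℝ) := Nat.cast_nonneg n
            linarith
          have htc : ∀ p : ((k : Fin g) × Fin (m k)), ‖t n p‖ ^ (c p) ≤ K / ((n : ℝ) + 1) := by
            intro p
            rw [habspow n p]
            have h4 : ‖w p‖ ≤ ‖w‖ := by
              have := norm_le_pi_norm w p
              exact this
            have h5 : ‖w p‖ ≤ K := by rw [hKdef]; linarith
            exact (div_le_div_iff_of_pos_right (hn1pos n)).mpr h5
          have h5 := hmain ((n : ℝ) + 1) K hS1 hK1 (t n) htnorm htc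
          have h6 : ‖((n : ℂ) + 1) * qoPhi m b f (t n)‖ =
              ((n : ℝ) + 1) * ‖qoPhi m b f (t n)‖ := by
            rw [norm_mul, habsnc]
          rw [h6]
          exact h5
        · exact htendbound K _ (tendsto_atTop_add_const_right _ _ tendsto_natCast_atTop_atTop)
      exact Tendsto.prodMk_nhds tendsto_const_nhds h2nd


end
end
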